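/- arXiv:2104.03690 — 4 statements merged into one kernel-verified Lean document; each statement's English description precedes it below -/
import Mathlib

section
/- Let F, F' ⊆ [0,1) be finite sets and let G be a subgroup of the group Π of timed automorphisms. If Π_F ⊆ G and Π_{F'} ⊆ G, then Π_{F ∩ F'} ⊆ G. -/
/-- A permutation of `ℝ` is a timed automorphism if it is strictly monotone
and preserves integer differences: `π (t + 1) = π t + 1`. -/
def IsTimedAutPerm (π : Equiv.Perm ℝ) : Prop :=
  StrictMono π ∧ ∀ t : ℝ, π (t + 1) = π t + 1

/-- `Π_S`: the set of `S`-timed automorphisms (as permutations of `ℝ`). -/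
def TimedAutFixing (S : Set ℝ) : Set (Equiv.Perm ℝ) :=
  {π | IsTimedAutPerm π ∧ ∀ t ∈ S, π t = t}

lemma ita_one : IsTimedAutPerm 1 := by
  constructor
  · exact fun a b h => h
  · intro t; rfl

lemma ita_mul {π σ : Equiv.Perm ℝ} (hπ : IsTimedAutPerm π) (hσ : IsTimedAutPerm σ) :
    IsTimedAutPerm (π * σ) := by
  constructor
  · exact fun a b h => hπ.1 (hσ.1 h)
  · intro t
    show π (σ (t+1)) = π (σ t) + 1
    rw [hσ.2, hπ.2]

lemma ita_inv {π : Equiv.Perm ℝ} (hπ : IsTimedAutPerm π) : IsTimedAutPerm π⁻¹ := by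
  constructor
  · intro a b h
    rw [← hπ.1.lt_iff_lt]
    simp only [Equiv.Perm.inv_def, Equiv.apply_symm_apply]
    exact h
  · intro t
    apply hπ.1.injective
    rw [hπ.2]
    simp only [Equiv.Perm.inv_def, Equiv.apply_symm_apply]

lemma ita_int {π : Equiv.Perm ℝ} (hπ : IsTimedAutPerm π) (t : ℝ) (k : ℤ) :
    π (t + k) = π t + k := by
  induction k using Int.induction_on with
  | zero => simp
  | succ n ih => push_cast; push_cast at ih; rw [show t + (n+1) = (t + n) + 1 by ring, hπ.2, ih]; ring
  | pred n ih =>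
      push_cast at ih ⊢
      have : π (t + (-(n:ℝ) - 1) + 1) = π (t + (-n-1)) + 1 := hπ.2 _
      rw [show t + (-(n:ℝ)-1) + 1 = t + -(n:ℝ) by ring] at this
      rw [ih] at this
      have h2 : π (t + (-(n:ℝ)-1)) = π t + (-(n:ℝ)-1) := by linarith
      exact h2

lemma taf_mono {S T : Set ℝ} (h : S ⊆ T) : TimedAutFixing T ⊆ TimedAutFixing S :=
  fun π hπ => ⟨hπ.1, fun t ht => hπ.2 t (h ht)⟩

lemma taf_one (S : Set ℝ) : (1 : Equiv.Perm ℝ) ∈ TimedAutFixing S :=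
  ⟨ita_one, fun _ _ => rfl⟩

lemma taf_mul {S : Set ℝ} {π σ : Equiv.Perm ℝ} (hπ : π ∈ TimedAutFixing S)
    (hσ : σ ∈ TimedAutFixing S) : π * σ ∈ TimedAutFixing S := by
  refine ⟨ita_mul hπ.1 hσ.1, fun t ht => ?_⟩
  show π (σ t) = t
  rw [hσ.2 t ht, hπ.2 t ht]

lemma taf_inv {S : Set ℝ} {π : Equiv.Perm ℝ} (hπ : π ∈ TimedAutFixing S) :
    π⁻¹ ∈ TimedAutFixing S := by
  refine ⟨ita_inv hπ.1, fun t ht => ?_⟩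
  have : π t = t := hπ.2 t ht
  calc π⁻¹ t = π⁻¹ (π t) := by rw [this]
  _ = t := by simp

lemma taf_fix_int {S : Set ℝ} {π : Equiv.Perm ℝ} (hπ : π ∈ TimedAutFixing S)
    {c : ℝ} (hc : c ∈ S) (k : ℤ) : π (c + k) = c + k := by
  rw [ita_int hπ.1, hπ.2 c hc]

/-! ### Gap lemma: adjacent translates of a finite set around a point -/

lemma exists_gap (P : Set ℝ) (hP : P.Finite) (hne : P.Nonempty) (u : ℝ)
    (hu : ∀ c ∈ P, ∀ k : ℤ, c + k ≠ u) :
    ∃ a b : ℝ, (∃ c ∈ P, ∃ j : ℤ, a = c + j) ∧ (∃ c ∈ P, ∃ j : ℤ, b = c + j)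
      ∧ a < u ∧ u < b ∧ b ≤ a + 1 ∧ ∀ c ∈ P, ∀ j : ℤ, (c + j ≤ a ∨ b ≤ c + j) := by
  classical
  set s : Finset ℝ := hP.toFinset with hs
  have hsne : s.Nonempty := by
    rcases hne with ⟨c, hc⟩
    exact ⟨c, by simp [hs, hc]⟩
  have hmem : ∀ c, c ∈ s ↔ c ∈ P := by intro c; simp [hs]
  set A : ℝ → ℝ := fun c => c + ((⌈u - c⌉ : ℤ) - 1 : ℤ) with hA
  set Bf : ℝ → ℝ := fun c => c + (⌈u - c⌉ : ℤ) with hBf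
  have hAlt : ∀ c ∈ P, A c < u := by
    intro c _
    have := Int.ceil_lt_add_one (u - c)
    simp only [hA]
    push_cast
    linarith
  have hBgt : ∀ c ∈ P, u < Bf c := by
    intro c hc
    have h1 : (u - c) ≤ (⌈u - c⌉ : ℝ) := Int.le_ceil _
    rcases lt_or_eq_of_le h1 with h | h
    · simp only [hBf]; linarith
    · exfalso; exact hu c hc ⌈u - c⌉ (by linarith)
  set a : ℝ := (s.image A).max' (hsne.image A) with ha
  set b : ℝ := (s.image Bf).min' (hsne.image Bf) with hb
  have haP : ∃ c ∈ P, ∃ j : ℤ, a = c + j := by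
    have := (s.image A).max'_mem (hsne.image A)
    rw [← ha] at this
    rcases Finset.mem_image.mp this with ⟨c, hc, hac⟩
    exact ⟨c, (hmem c).mp hc, ⌈u - c⌉ - 1, by rw [← hac]⟩
  have hbP : ∃ c ∈ P, ∃ j : ℤ, b = c + j := by
    have := (s.image Bf).min'_mem (hsne.image Bf)
    rw [← hb] at this
    rcases Finset.mem_image.mp this with ⟨c, hc, hbc⟩
    exact ⟨c, (hmem c).mp hc, ⌈u - c⌉, by rw [← hbc]⟩
  have hau : a < u := by
    rcases haP with ⟨c, hc, j, hj⟩
    have := (s.image A).max'_mem (hsne.image A)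
    rw [← ha] at this
    rcases Finset.mem_image.mp this with ⟨c', hc', hac⟩
    rw [← hac] at *
    exact hAlt c' ((hmem c').mp hc')
  have hub : u < b := by
    have := (s.image Bf).min'_mem (hsne.image Bf)
    rw [← hb] at this
    rcases Finset.mem_image.mp this with ⟨c', hc', hbc⟩
    rw [← hbc]
    exact hBgt c' ((hmem c').mp hc')
  have hba : b ≤ a + 1 := by
    rcases hsne with ⟨c0, hc0⟩
    have h1 : b ≤ Bf c0 := Finset.min'_le _ _ (Finset.mem_image_of_mem Bf hc0)
    have h2 : A c0 ≤ a := Finset.le_max' _ _ (Finset.mem_image_of_mem A hc0)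
    have : Bf c0 = A c0 + 1 := by simp only [hA, hBf]; push_cast; ring
    linarith
  refine ⟨a, b, haP, hbP, hau, hub, hba, ?_⟩
  intro c hc j
  rcases le_or_gt (j : ℝ) ((⌈u - c⌉ : ℝ) - 1) with h | h
  · left
    have h2 : A c ≤ a := Finset.le_max' _ _ (Finset.mem_image_of_mem A ((hmem c).mpr hc))
    have : c + (j:ℝ) ≤ A c := by simp only [hA]; push_cast; linarith
    linarith
  · right
    have hj2 : (⌈u - c⌉ : ℝ) ≤ j := by
      have h3 : (⌈u - c⌉ : ℤ) - 1 < j := by exact_mod_cast h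
      have h4 : ⌈u - c⌉ ≤ j := by omega
      exact_mod_cast h4
    have h2 : b ≤ Bf c := Finset.min'_le _ _ (Finset.mem_image_of_mem Bf ((hmem c).mpr hc))
    have : Bf c ≤ c + (j:ℝ) := by simp only [hBf]; linarith
    linarith
/-! ### Piecewise linear local interpolation -/

noncomputable def gfun (a b u w x : ℝ) : ℝ :=
  if x ≤ a then x else if b ≤ x then x
  else if x ≤ u then a + (x - a) * ((w - a) / (u - a))
  else b - (b - x) * ((b - w) / (b - u))

noncomputable def ffun (a b u w x : ℝ) : ℝ :=
  gfun a b u w (x - ⌈x - b⌉) + ⌈x - b⌉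

section construction

variable {a b u w : ℝ} (hau : a < u) (hub : u < b) (haw : a < w) (hwb : w < b)
  (hba : b ≤ a + 1)

include hau hub in
lemma g_id {x : ℝ} (hx : x ≤ a ∨ b ≤ x) : gfun a b u w x = x := by
  unfold gfun
  rcases hx with h | h
  · rw [if_pos h]
  · rw [if_neg (by intro h2; linarith), if_pos h]

include hub in
lemma g_eval_left {x : ℝ} (h1 : a < x) (h3 : x ≤ u) :
    gfun a b u w x = a + (x - a) * ((w - a) / (u - a)) := by
  unfold gfun
  rw [if_neg (by linarith), if_neg (by intro h; linarith), if_pos h3]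

include hau in
lemma g_eval_right {x : ℝ} (h3 : u < x) (h2 : x < b) :
    gfun a b u w x = b - (b - x) * ((b - w) / (b - u)) := by
  unfold gfun
  rw [if_neg (by linarith), if_neg (by linarith), if_neg (by linarith)]

include hau hub haw hwb in
lemma g_bounds_left {x : ℝ} (h1 : a < x) (h3 : x ≤ u) :
    a < gfun a b u w x ∧ gfun a b u w x ≤ w := by
  rw [g_eval_left hub h1 h3]
  have hs : (0:ℝ) < (w - a) / (u - a) := div_pos (by linarith) (by linarith)
  have heq : (u - a) * ((w - a) / (u - a)) = w - a := by
    rw [mul_comm]; exact div_mul_cancel₀ _ (by linarith)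
  constructor
  · nlinarith
  · nlinarith [mul_le_mul_of_nonneg_right (by linarith : x - a ≤ u - a) hs.le]

include hau hub haw hwb in
lemma g_bounds_right {x : ℝ} (h3 : u < x) (h2 : x < b) :
    w < gfun a b u w x ∧ gfun a b u w x < b := by
  rw [g_eval_right hau h3 h2]
  have hr : (0:ℝ) < (b - w) / (b - u) := div_pos (by linarith) (by linarith)
  have heq : (b - u) * ((b - w) / (b - u)) = b - w := by
    rw [mul_comm]; exact div_mul_cancel₀ _ (by linarith)
  constructor
  · nlinarith [mul_lt_mul_of_pos_right (by linarith : b - x < b - u) hr]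
  · nlinarith

include hau hub haw hwb in
lemma g_spec : gfun a b u w u = w := by
  rw [g_eval_left hub hau le_rfl]
  have heq : (u - a) * ((w - a) / (u - a)) = w - a := by
    rw [mul_comm]; exact div_mul_cancel₀ _ (by linarith)
  linarith

include hau hub haw hwb in
lemma g_mono : StrictMono (gfun a b u w) := by
  intro x y hxy
  have hs : (0:ℝ) < (w - a) / (u - a) := div_pos (by linarith) (by linarith)
  have hr : (0:ℝ) < (b - w) / (b - u) := div_pos (by linarith) (by linarith)
  rcases le_or_gt x a with hx1 | hx1
  · -- x in L
    rw [g_id hau hub (Or.inl hx1)]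
    rcases le_or_gt y a with hy1 | hy1
    · rw [g_id hau hub (Or.inl hy1)]; exact hxy
    rcases lt_or_ge y b with hy2 | hy2
    · rcases le_or_gt y u with hy3 | hy3
      · exact lt_of_le_of_lt hx1 (g_bounds_left hau hub haw hwb hy1 hy3).1
      · exact lt_of_le_of_lt (by linarith) (g_bounds_right hau hub haw hwb hy3 hy2).1
    · rw [g_id hau hub (Or.inr hy2)]; exact hxy
  rcases le_or_gt b x with hx2 | hx2
  · -- x in R, so y in R
    rw [g_id hau hub (Or.inr hx2), g_id hau hub (Or.inr (by linarith))]; exact hxy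
  rcases le_or_gt x u with hx3 | hx3
  · -- x in M1
    have hbx := g_bounds_left hau hub haw hwb hx1 hx3
    rcases le_or_gt y u with hy3 | hy3
    · -- y in M1
      rw [g_eval_left hub hx1 hx3, g_eval_left hub (by linarith) hy3]
      nlinarith
    rcases lt_or_ge y b with hy2 | hy2
    · exact lt_of_le_of_lt hbx.2 (g_bounds_right hau hub haw hwb hy3 hy2).1
    · rw [g_id hau hub (Or.inr hy2)]; linarith [hbx.2]
  · -- x in M2
    have hbx := g_bounds_right hau hub haw hwb hx3 hx2
    rcases lt_or_ge y b with hy2 | hy2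
    · -- y in M2
      rw [g_eval_right hau hx3 hx2, g_eval_right hau (by linarith) hy2]
      nlinarith
    · rw [g_id hau hub (Or.inr hy2)]; linarith [hbx.2]

include hau hub haw hwb hba in
lemma g_comp {x : ℝ} : gfun a b w u (gfun a b u w x) = x := by
  rcases le_or_gt x a with hx1 | hx1
  · rw [g_id hau hub (Or.inl hx1), g_id haw hwb (Or.inl hx1)]
  rcases le_or_gt b x with hx2 | hx2
  · rw [g_id hau hub (Or.inr hx2), g_id haw hwb (Or.inr hx2)]
  rcases le_or_gt x u with hx3 | hx3
  · have hb := g_bounds_left hau hub haw hwb hx1 hx3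
    rw [g_eval_left hub hx1 hx3]
    rw [g_eval_left hub hx1 hx3] at hb
    rw [g_eval_left hwb (by linarith [hb.1]) hb.2]
    have h1 : ((w-a)/(u-a)) * ((u-a)/(w-a)) = 1 := by
      rw [div_mul_div_comm, mul_comm]
      exact div_self (by nlinarith)
    rw [add_sub_cancel_left, mul_assoc, h1, mul_one]
    ring
  · have hb := g_bounds_right hau hub haw hwb hx3 hx2
    rw [g_eval_right hau hx3 hx2]
    rw [g_eval_right hau hx3 hx2] at hb
    rw [g_eval_right haw hb.1 hb.2]
    have h1 : ((b-w)/(b-u)) * ((b-u)/(b-w)) = 1 := by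
      rw [div_mul_div_comm, mul_comm]
      exact div_self (by nlinarith)
    rw [sub_sub_cancel, mul_assoc, h1, mul_one, sub_sub_cancel]

end construction
section construction2

variable {a b u w : ℝ} (hau : a < u) (hub : u < b) (haw : a < w) (hwb : w < b)
  (hba : b ≤ a + 1)

lemma ceil_window (b x : ℝ) : b - 1 < x - ⌈x - b⌉ ∧ x - ⌈x - b⌉ ≤ b := by
  have h1 : (x - b) ≤ ⌈x - b⌉ := Int.le_ceil _
  have h2 : (⌈x - b⌉ : ℝ) < (x - b) + 1 := Int.ceil_lt_add_one _
  constructor <;> linarith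

include hau hub haw hwb hba in
lemma g_window {t : ℝ} (h1 : b - 1 < t) (h2 : t ≤ b) :
    b - 1 < gfun a b u w t ∧ gfun a b u w t ≤ b := by
  rcases le_or_gt t a with h | h
  · rw [g_id hau hub (Or.inl h)]; exact ⟨h1, h2⟩
  rcases lt_or_ge t b with h3 | h3
  · rcases le_or_gt t u with h4 | h4
    · have hb := g_bounds_left hau hub haw hwb h h4
      exact ⟨by linarith, by linarith⟩
    · have hb := g_bounds_right hau hub haw hwb h4 h3
      exact ⟨by linarith, by linarith⟩
  · have ht : t = b := le_antisymm h2 h3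
    rw [ht, g_id hau hub (Or.inr le_rfl)]
    exact ⟨by linarith, le_rfl⟩

include hau hub haw hwb hba in
lemma f_mono : StrictMono (ffun a b u w) := by
  intro x y hxy
  unfold ffun
  have hwx := ceil_window b x
  have hwy := ceil_window b y
  have hk : ⌈x - b⌉ ≤ ⌈y - b⌉ := Int.ceil_le_ceil (by linarith)
  rcases eq_or_lt_of_le hk with he | hlt
  · rw [he]
    have hlt2 : x - (⌈y - b⌉ : ℝ) < y - (⌈y - b⌉ : ℝ) := by linarith
    have := g_mono hau hub haw hwb hlt2
    linarith
  · have w1 := g_window hau hub haw hwb hba hwx.1 hwx.2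
    have w2 := g_window hau hub haw hwb hba hwy.1 hwy.2
    have hc : (⌈x - b⌉ : ℝ) + 1 ≤ (⌈y - b⌉ : ℝ) := by exact_mod_cast hlt
    linarith

lemma f_period (x : ℝ) : ffun a b u w (x + 1) = ffun a b u w x + 1 := by
  unfold ffun
  have h : ⌈x + 1 - b⌉ = ⌈x - b⌉ + 1 := by
    rw [show x + 1 - b = (x - b) + (1:ℤ) by push_cast; ring, Int.ceil_add_intCast]
  rw [h]
  have : x + 1 - ((⌈x - b⌉ : ℤ) + 1 : ℤ) = x - ⌈x - b⌉ := by push_cast; ring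
  rw [this]
  push_cast
  ring

include hau hub haw hwb hba in
lemma f_spec : ffun a b u w u = w := by
  unfold ffun
  have h : ⌈u - b⌉ = 0 := by
    rw [Int.ceil_eq_zero_iff]
    constructor <;> linarith
  rw [h]
  push_cast
  rw [sub_zero, add_zero]
  exact g_spec hau hub haw hwb

include hau hub in
lemma f_fix {x : ℝ} (hx : x - ⌈x - b⌉ ≤ a ∨ b ≤ x - ⌈x - b⌉) : ffun a b u w x = x := by
  unfold ffun
  rw [g_id hau hub hx]
  ring

include hau hub haw hwb hba in
lemma f_comp (x : ℝ) : ffun a b w u (ffun a b u w x) = x := by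
  unfold ffun
  set k := ⌈x - b⌉ with hk
  have hwx := ceil_window b x
  have hg := g_window hau hub haw hwb hba hwx.1 hwx.2
  have h2 : ⌈gfun a b u w (x - k) + (k:ℝ) - b⌉ = k := by
    rw [show gfun a b u w (x - k) + (k:ℝ) - b = (gfun a b u w (x - k) - b) + (k:ℤ) by push_cast; ring,
      Int.ceil_add_intCast]
    have : ⌈gfun a b u w (x - k) - b⌉ = 0 := by
      rw [Int.ceil_eq_zero_iff]
      constructor <;> linarith
    rw [this, zero_add]
  rw [h2]
  have h3 : gfun a b u w (x - k) + (k:ℝ) - (k:ℝ) = gfun a b u w (x - k) := by ring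
  rw [h3, g_comp hau hub haw hwb hba]
  ring

end construction2

/-! ### The one-point move lemma -/

lemma exists_move (P : Set ℝ) (hP : P.Finite) (hne : P.Nonempty) (u w : ℝ)
    (hu : ∀ c ∈ P, ∀ k : ℤ, c + k ≠ u) (hw : ∀ c ∈ P, ∀ k : ℤ, c + k ≠ w)
    (hside : ∀ c ∈ P, ∀ k : ℤ, ((c:ℝ) + k < u ↔ c + k < w)) :
    ∃ π ∈ TimedAutFixing P, π u = w := by
  obtain ⟨a, b, haP, hbP, hau, hub, hba1, hgap'⟩ := exists_gap P hP hne u hu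
  -- w ∈ (a, b)
  have haw : a < w := by
    obtain ⟨c, hc, j, hj⟩ := haP
    rw [hj]; rw [hj] at hau
    exact (hside c hc j).mp hau
  have hwb : w < b := by
    obtain ⟨c, hc, j, hj⟩ := hbP
    rw [hj]; rw [hj] at hub
    have h1 : ¬ (c + (j:ℝ) < w) := by
      rw [← hside c hc j]; linarith
    have h2 : c + (j:ℝ) ≠ w := hw c hc j
    push_neg at h1
    exact lt_of_le_of_ne h1 (Ne.symm h2)
  refine ⟨⟨ffun a b u w, ffun a b w u,
      fun x => f_comp hau hub haw hwb hba1 x,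
      fun x => f_comp haw hwb hau hub hba1 x⟩, ⟨⟨?_, ?_⟩, ?_⟩, ?_⟩
  · exact f_mono hau hub haw hwb hba1
  · exact fun t => f_period t
  · intro c hc
    show ffun a b u w c = c
    apply f_fix hau hub
    have hd := hgap' c hc (-⌈c - b⌉)
    push_cast at hd
    rcases hd with h | h
    · left; linarith
    · right; linarith
  · show ffun a b u w u = w
    exact f_spec hau hub haw hwb hba1
/-! ### Orbit lemmas -/

lemma ceil_translate {c q : ℝ} (h : ∀ k : ℤ, c + (k:ℝ) ≠ q) :
    q < c + (⌈q - c⌉:ℝ) ∧ c + (⌈q - c⌉:ℝ) < q + 1 := by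
  have h1 : q - c ≤ (⌈q - c⌉ : ℝ) := Int.le_ceil _
  have h2 : (⌈q - c⌉ : ℝ) < (q - c) + 1 := Int.ceil_lt_add_one _
  have h3 : q - c ≠ (⌈q - c⌉ : ℝ) := by
    intro he
    exact h ⌈q - c⌉ (by linarith)
  refine ⟨?_, by linarith⟩
  rcases lt_or_eq_of_le h1 with h | h
  · linarith
  · exact absurd h h3

lemma int_zero_of_abs_lt {k : ℤ} {x : ℝ} (h1 : -1 < x) (h2 : x < 1) (he : (k:ℝ) = x) :
    k = 0 := by
  have a1 : (-1:ℤ) < k := by exact_mod_cast (show (-1:ℝ) < k by rw [he]; exact h1)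
  have a2 : (k:ℤ) < 1 := by exact_mod_cast (show (k:ℝ) < 1 by rw [he]; exact h2)
  omega

lemma far_empty {B : Set ℝ} {q x : ℝ}
    (hq : ∀ c ∈ B, ∀ k : ℤ, c + (k:ℝ) ≠ q)
    (Hx : ∀ c ∈ B, ∀ k : ℤ, (c + (k:ℝ) < x ↔ c + (k:ℝ) < q))
    (hfar : q + 1 ≤ x ∨ x ≤ q - 1) : B = ∅ := by
  by_contra hne
  rcases Set.nonempty_iff_ne_empty.mpr hne with ⟨c, hc⟩
  have hct := ceil_translate (hq c hc)
  rcases hfar with h | h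
  · have h1 : c + (⌈q - c⌉:ℝ) < x := by linarith
    have h2 := (Hx c hc ⌈q - c⌉).mp h1
    linarith
  · have h1 : c + ((⌈q - c⌉ - 1 : ℤ):ℝ) < q := by push_cast; linarith
    have h2 := (Hx c hc (⌈q - c⌉ - 1)).mpr h1
    push_cast at h2
    linarith

section orbit

variable {B : Set ℝ} (hB : B.Finite) {p q : ℝ}
  (hq : ∀ c ∈ B, ∀ k : ℤ, c + (k:ℝ) ≠ q)
  (hpq : ∀ k : ℤ, p + (k:ℝ) ≠ q)
  {G : Subgroup (Equiv.Perm ℝ)}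
  (hPG : TimedAutFixing (B ∪ {p}) ⊆ ↑G)
  (hQG : TimedAutFixing (B ∪ {q}) ⊆ ↑G)

include hB hq hpq hPG hQG in
lemma reach_near {x : ℝ}
    (hxB : ∀ c ∈ B, ∀ k : ℤ, c + (k:ℝ) ≠ x)
    (Hx : ∀ c ∈ B, ∀ k : ℤ, (c + (k:ℝ) < x ↔ c + (k:ℝ) < q))
    (hx1 : q - 1 < x) (hx2 : x < q + 1) (hxq : x ≠ q) :
    ∃ g ∈ TimedAutFixing B, (g : Equiv.Perm ℝ) ∈ G ∧ g x = q := by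
  classical
  have hxq' : ∀ k : ℤ, q + (k:ℝ) ≠ x := by
    intro k hk
    have hk0 : k = 0 := int_zero_of_abs_lt (by linarith) (by linarith) (by linarith)
    subst hk0
    push_cast at hk
    exact hxq (by linarith)
  have hmid : ∀ c ∈ B ∪ {q}, ∀ k : ℤ, ¬(min x q < c + (k:ℝ) ∧ c + (k:ℝ) < max x q) := by
    rintro c (hc | hc) k ⟨ha, hb⟩
    · rcases le_or_gt x q with hle | hle
      · rw [min_eq_left hle] at ha
        rw [max_eq_right hle] at hb
        have := (Hx c hc k).mpr hb
        linarith
      · rw [min_eq_right hle.le] at ha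
        rw [max_eq_left hle.le] at hb
        have := (Hx c hc k).mp hb
        linarith
    · simp only [Set.mem_singleton_iff] at hc
      rw [hc] at ha hb
      have hmn : q - 1 < min x q := lt_min hx1 (by linarith)
      have hmx : max x q < q + 1 := max_lt hx2 (by linarith)
      have hk0 : k = 0 := int_zero_of_abs_lt (x := (k:ℝ)) (by linarith) (by linarith) rfl
      subst hk0
      push_cast at ha hb
      rcases le_or_gt x q with hle | hle
      · rw [max_eq_right hle] at hb; linarith
      · rw [min_eq_right hle.le] at ha; linarith
  have hQtr : ∀ c ∈ B ∪ {q}, ∀ k : ℤ, c + (k:ℝ) ≠ x := by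
    rintro c (hc | hc) k
    · exact hxB c hc k
    · simp only [Set.mem_singleton_iff] at hc; subst hc; exact hxq' k
  have hQne : (B ∪ {q}).Nonempty := ⟨q, Or.inr rfl⟩
  have hPne : (B ∪ {p}).Nonempty := ⟨p, Or.inr rfl⟩
  have hPfin : (B ∪ {p}).Finite := hB.union (Set.finite_singleton p)
  have hQfin : (B ∪ {q}).Finite := hB.union (Set.finite_singleton q)
  have hqP : ∀ c ∈ B ∪ {p}, ∀ k : ℤ, c + (k:ℝ) ≠ q := by
    rintro c (hc | hc) k
    · exact hq c hc k
    · simp only [Set.mem_singleton_iff] at hc; subst hc; exact hpq k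
  obtain ⟨a, b, haP, hbP, hau, hub, hba1, hgap'⟩ := exists_gap _ hPfin hPne q hqP
  rcases lt_or_gt_of_ne hxq with hlt | hgt
  · -- x < q ; z := (max a x + q)/2
    set z := (max a x + q)/2 with hz
    have hmax : max a x < q := max_lt hau hlt
    have hz1 : max a x < z := by simp only [hz]; linarith
    have hz2 : z < q := by simp only [hz]; linarith
    have hzx : x < z := lt_of_le_of_lt (le_max_right a x) hz1
    have hza : a < z := lt_of_le_of_lt (le_max_left a x) hz1
    obtain ⟨πQ, hπQ, hπQx⟩ := exists_move _ hQfin hQne x z hQtr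
      (by
        intro c hc k hk
        refine hmid c hc k ⟨?_, ?_⟩
        · rw [hk, min_eq_left hlt.le]; exact hzx
        · rw [hk, max_eq_right hlt.le]; exact hz2)
      (by
        intro c hc k
        constructor
        · intro h; linarith
        · intro h
          by_contra h2
          push_neg at h2
          have h3 : x < c + (k:ℝ) := lt_of_le_of_ne h2 (Ne.symm (hQtr c hc k))
          exact hmid c hc k ⟨by rw [min_eq_left hlt.le]; exact h3,
            by rw [max_eq_right hlt.le]; linarith⟩)
    obtain ⟨πP, hπP, hπPz⟩ := exists_move _ hPfin hPne z q
      (by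
        intro c hc k hk
        rcases hgap' c hc k with h | h
        · rw [hk] at h; linarith
        · rw [hk] at h; linarith)
      hqP
      (by
        intro c hc k
        rcases hgap' c hc k with h | h
        · constructor <;> intro _ <;> linarith
        · constructor <;> intro _ <;> linarith)
    refine ⟨πP * πQ, taf_mul (taf_mono Set.subset_union_left hπP)
      (taf_mono Set.subset_union_left hπQ),
      Subgroup.mul_mem G (hPG hπP) (hQG hπQ), ?_⟩
    show πP (πQ x) = q
    rw [hπQx, hπPz]
  · -- x > q ; z := (min b x + q)/2
    set z := (min b x + q)/2 with hz
    have hmin : q < min b x := lt_min hub hgt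
    have hz1 : z < min b x := by simp only [hz]; linarith
    have hz2 : q < z := by simp only [hz]; linarith
    have hzx : z < x := lt_of_lt_of_le hz1 (min_le_right b x)
    have hzb : z < b := lt_of_lt_of_le hz1 (min_le_left b x)
    obtain ⟨πQ, hπQ, hπQx⟩ := exists_move _ hQfin hQne x z hQtr
      (by
        intro c hc k hk
        refine hmid c hc k ⟨?_, ?_⟩
        · rw [hk, min_eq_right hgt.le]; exact hz2
        · rw [hk, max_eq_left hgt.le]; exact hzx)
      (by
        intro c hc k
        rcases le_or_gt (c + (k:ℝ)) q with h | h
        · constructor <;> intro _ <;> linarith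
        · have h2 : ¬ (c + (k:ℝ) < x) := by
            intro h3
            exact hmid c hc k ⟨by rw [min_eq_right hgt.le]; exact h,
              by rw [max_eq_left hgt.le]; exact h3⟩
          push_neg at h2
          have h3 : x < c + (k:ℝ) := lt_of_le_of_ne h2 (Ne.symm (hQtr c hc k))
          constructor <;> intro _ <;> linarith)
    obtain ⟨πP, hπP, hπPz⟩ := exists_move _ hPfin hPne z q
      (by
        intro c hc k hk
        rcases hgap' c hc k with h | h
        · rw [hk] at h; linarith
        · rw [hk] at h; linarith)
      hqP
      (by
        intro c hc k
        rcases hgap' c hc k with h | h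
        · constructor <;> intro _ <;> linarith
        · constructor <;> intro _ <;> linarith)
    refine ⟨πP * πQ, taf_mul (taf_mono Set.subset_union_left hπP)
      (taf_mono Set.subset_union_left hπQ),
      Subgroup.mul_mem G (hPG hπP) (hQG hπQ), ?_⟩
    show πP (πQ x) = q
    rw [hπQx, hπPz]

end orbit
/-! ### Window helpers -/

lemma translate_ne_of_window {c z : ℝ} (M : ℤ) (h1 : c + (M:ℝ) - 1 < z)
    (h2 : z < c + (M:ℝ)) : ∀ j : ℤ, c + (j:ℝ) ≠ z := by
  intro j hj
  have h0 : (M - j : ℤ) = 0 := int_zero_of_abs_lt (x := (M:ℝ) - (j:ℝ))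
    (by linarith) (by linarith) (by push_cast; ring)
  have : (M:ℝ) = (j:ℝ) := by exact_mod_cast (by omega : M = j)
  linarith

lemma side_of_window {c x z : ℝ} (M : ℤ) (hx1 : c + (M:ℝ) - 1 < x) (hx2 : x < c + (M:ℝ))
    (hz1 : c + (M:ℝ) - 1 < z) (hz2 : z < c + (M:ℝ)) :
    ∀ j : ℤ, (c + (j:ℝ) < x ↔ c + (j:ℝ) < z) := by
  intro j
  rcases le_or_gt j (M-1) with h | h
  · have hc : (j:ℝ) ≤ (M:ℝ) - 1 := by exact_mod_cast (by push_cast; exact_mod_cast h : (j:ℝ) ≤ ((M-1 : ℤ):ℝ))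
    constructor <;> intro _ <;> linarith
  · have hc : (M:ℝ) ≤ (j:ℝ) := by exact_mod_cast (by omega : M ≤ j)
    constructor <;> intro _ <;> linarith

lemma singleton_move (c : ℝ) (u w e : ℝ) (M : ℤ) (he : e = c + (M:ℝ))
    (hu1 : e - 1 < u) (hu2 : u < e) (hw1 : e - 1 < w) (hw2 : w < e) :
    ∃ π ∈ TimedAutFixing {c}, π u = w := by
  subst he
  apply exists_move {c} (Set.finite_singleton c) ⟨c, rfl⟩ u w
  · intro d hd k
    simp only [Set.mem_singleton_iff] at hd; subst hd
    exact translate_ne_of_window M hu1 hu2 k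
  · intro d hd k
    simp only [Set.mem_singleton_iff] at hd; subst hd
    exact translate_ne_of_window M hw1 hw2 k
  · intro d hd k
    simp only [Set.mem_singleton_iff] at hd; subst hd
    exact side_of_window M hu1 hu2 hw1 hw2 k

section orbit2

variable {B : Set ℝ} (hB : B.Finite) {p q : ℝ}
  (hq : ∀ c ∈ B, ∀ k : ℤ, c + (k:ℝ) ≠ q)
  (hpq : ∀ k : ℤ, p + (k:ℝ) ≠ q)
  {G : Subgroup (Equiv.Perm ℝ)}
  (hPG : TimedAutFixing (B ∪ {p}) ⊆ ↑G)
  (hQG : TimedAutFixing (B ∪ {q}) ⊆ ↑G)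

include hB hq hpq hPG hQG in
lemma orbit_aux : ∀ n : ℕ, ∀ x : ℝ,
    (∀ c ∈ B, ∀ k : ℤ, c + (k:ℝ) ≠ x) →
    (∀ c ∈ B, ∀ k : ℤ, (c + (k:ℝ) < x ↔ c + (k:ℝ) < q)) →
    (∀ k : ℤ, q + (k:ℝ) ≠ x) → (2 * ⌊x - q⌋ + 1).natAbs ≤ n →
    ∃ g ∈ TimedAutFixing B, (g : Equiv.Perm ℝ) ∈ G ∧ g x = q := by
  intro n
  induction n with
  | zero => intro x _ _ _ hn; exfalso; omega
  | succ n ih =>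
    intro x hxB Hx hxq hn
    have hf1 : q + (⌊x - q⌋:ℝ) ≤ x := by
      have := Int.floor_le (x - q); linarith
    have hf2 : x < q + (⌊x - q⌋:ℝ) + 1 := by
      have := Int.lt_floor_add_one (x - q); linarith
    have hf3 : q + (⌊x - q⌋:ℝ) < x := lt_of_le_of_ne hf1 (hxq ⌊x - q⌋)
    by_cases h0 : ⌊x - q⌋ = 0 ∨ ⌊x - q⌋ = -1
    · -- near case
      have hb1 : q - 1 < x := by
        rcases h0 with h | h <;> rw [h] at hf3 <;> push_cast at hf3 <;> linarith
      have hb2 : x < q + 1 := by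
        rcases h0 with h | h <;> rw [h] at hf2 <;> push_cast at hf2 <;> linarith
      have hbq : x ≠ q := by
        rcases h0 with h | h
        · rw [h] at hf3; push_cast at hf3; intro he; linarith
        · rw [h] at hf2; push_cast at hf2; intro he; linarith
      exact reach_near hB hq hpq hPG hQG hxB Hx hb1 hb2 hbq
    · -- far case
      push_neg at h0
      have hk : 1 ≤ ⌊x - q⌋ ∨ ⌊x - q⌋ ≤ -2 := by omega
      have hfar : q + 1 ≤ x ∨ x ≤ q - 1 := by
        rcases hk with h | h
        · left
          have : (1:ℝ) ≤ (⌊x - q⌋:ℝ) := by exact_mod_cast h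
          linarith
        · right
          have : (⌊x - q⌋:ℝ) ≤ -2 := by exact_mod_cast h
          linarith
      have hBe := far_empty hq Hx hfar
      subst hBe
      rw [Set.empty_union] at hPG hQG
      set K := ⌊x - q⌋ with hK
      rcases hk with hk1 | hk1
      · -- K ≥ 1 : move down
        set w₀ := q + (K:ℝ) with hw0
        have hw0p : ∀ j : ℤ, p + (j:ℝ) ≠ w₀ := by
          intro j hj
          exact hpq (j - K) (by push_cast; linarith)
        have hct := ceil_translate hw0p
        set pm1 := p + (⌈w₀ - p⌉:ℝ) with hpm1
        -- w₀ < pm1 < w₀ + 1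
        set z := (w₀ + pm1)/2 with hzdef
        set y := (max (pm1 - 1) (w₀ - 1) + w₀)/2 with hydef
        have hz1 : w₀ < z := by simp only [hzdef]; linarith [hct.1]
        have hz2 : z < pm1 := by simp only [hzdef]; linarith [hct.1]
        have hz3 : z < w₀ + 1 := by linarith [hct.2]
        have hymax : max (pm1 - 1) (w₀ - 1) < w₀ := max_lt (by linarith [hct.1]) (by linarith)
        have hy1 : max (pm1 - 1) (w₀ - 1) < y := by simp only [hydef]; linarith
        have hy2 : y < w₀ := by simp only [hydef]; linarith
        have hy3 : pm1 - 1 < y := lt_of_le_of_lt (le_max_left _ _) hy1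
        have hy4 : w₀ - 1 < y := lt_of_le_of_lt (le_max_right _ _) hy1
        obtain ⟨πQ, hπQ, hπQx⟩ := singleton_move q x z (w₀ + 1) (K + 1)
          (by push_cast; linarith) (by linarith) (by linarith) (by linarith) (by linarith)
        obtain ⟨πP, hπP, hπPz⟩ := singleton_move p z y pm1 ⌈w₀ - p⌉ rfl
          (by linarith) (by linarith) (by linarith) (by linarith [hct.1])
        have hyfloor : ⌊y - q⌋ = K - 1 := by
          rw [Int.floor_eq_iff]
          constructor
          · push_cast; linarith
          · push_cast; linarith
        obtain ⟨g, hgfix, hgG, hgy⟩ := ih y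
          (fun c hc => absurd hc (Set.notMem_empty c))
          (fun c hc => absurd hc (Set.notMem_empty c))
          (by
            intro j hj
            exact translate_ne_of_window (c := q) K (by push_cast; linarith) (by linarith) j hj)
          (by rw [hyfloor]; omega)
        refine ⟨g * (πP * πQ), taf_mul hgfix (taf_mul
          (taf_mono (Set.empty_subset _) hπP) (taf_mono (Set.empty_subset _) hπQ)),
          Subgroup.mul_mem G hgG (Subgroup.mul_mem G (hPG hπP) (hQG hπQ)), ?_⟩
        show g (πP (πQ x)) = q
        rw [hπQx, hπPz, hgy]
      · -- K ≤ -2 : move up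
        set w₁ := q + (K:ℝ) + 1 with hw1
        have hw1p : ∀ j : ℤ, p + (j:ℝ) ≠ w₁ := by
          intro j hj
          exact hpq (j - K - 1) (by push_cast; linarith)
        have hct := ceil_translate hw1p
        set pm1 := p + (⌈w₁ - p⌉:ℝ) with hpm1
        -- w₁ < pm1 < w₁ + 1
        set z := (max (pm1 - 1) (w₁ - 1) + w₁)/2 with hzdef
        set y := (w₁ + pm1)/2 with hydef
        have hzmax : max (pm1 - 1) (w₁ - 1) < w₁ := max_lt (by linarith [hct.1]) (by linarith)
        have hz1 : max (pm1 - 1) (w₁ - 1) < z := by simp only [hzdef]; linarith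
        have hz2 : z < w₁ := by simp only [hzdef]; linarith
        have hz3 : pm1 - 1 < z := lt_of_le_of_lt (le_max_left _ _) hz1
        have hz4 : w₁ - 1 < z := lt_of_le_of_lt (le_max_right _ _) hz1
        have hy1 : w₁ < y := by simp only [hydef]; linarith [hct.1]
        have hy2 : y < pm1 := by simp only [hydef]; linarith [hct.1]
        have hy3 : y < w₁ + 1 := by linarith [hct.2]
        obtain ⟨πQ, hπQ, hπQx⟩ := singleton_move q x z w₁ (K + 1)
          (by push_cast; linarith) (by push_cast; linarith) (by linarith) (by linarith) (by linarith)
        obtain ⟨πP, hπP, hπPz⟩ := singleton_move p z y pm1 ⌈w₁ - p⌉ rfl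
          (by linarith) (by linarith [hct.1]) (by linarith) (by linarith)
        have hyfloor : ⌊y - q⌋ = K + 1 := by
          rw [Int.floor_eq_iff]
          constructor
          · push_cast; linarith
          · push_cast; linarith
        obtain ⟨g, hgfix, hgG, hgy⟩ := ih y
          (fun c hc => absurd hc (Set.notMem_empty c))
          (fun c hc => absurd hc (Set.notMem_empty c))
          (by
            intro j hj
            exact translate_ne_of_window (c := q) (K + 2) (by push_cast; linarith)
              (by push_cast; linarith) j hj)
          (by rw [hyfloor]; omega)
        refine ⟨g * (πP * πQ), taf_mul hgfix (taf_mul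
          (taf_mono (Set.empty_subset _) hπP) (taf_mono (Set.empty_subset _) hπQ)),
          Subgroup.mul_mem G hgG (Subgroup.mul_mem G (hPG hπP) (hQG hπQ)), ?_⟩
        show g (πP (πQ x)) = q
        rw [hπQx, hπPz, hgy]

end orbit2

section orbit3

variable {B : Set ℝ} (hB : B.Finite) {p q : ℝ}
  (hq : ∀ c ∈ B, ∀ k : ℤ, c + (k:ℝ) ≠ q)
  (hpq : ∀ k : ℤ, p + (k:ℝ) ≠ q)
  {G : Subgroup (Equiv.Perm ℝ)}
  (hPG : TimedAutFixing (B ∪ {p}) ⊆ ↑G)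
  (hQG : TimedAutFixing (B ∪ {q}) ⊆ ↑G)

include hB hq hpq hPG hQG in
lemma orbit_all (x : ℝ)
    (hxB : ∀ c ∈ B, ∀ k : ℤ, c + (k:ℝ) ≠ x)
    (Hx : ∀ c ∈ B, ∀ k : ℤ, (c + (k:ℝ) < x ↔ c + (k:ℝ) < q)) :
    ∃ g ∈ TimedAutFixing B, (g : Equiv.Perm ℝ) ∈ G ∧ g x = q := by
  by_cases hx : ∀ k : ℤ, q + (k:ℝ) ≠ x
  · exact orbit_aux hB hq hpq hPG hQG ((2 * ⌊x - q⌋ + 1).natAbs) x hxB Hx hx le_rfl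
  · push_neg at hx
    obtain ⟨K, hK⟩ := hx
    by_cases hK0 : K = 0
    · subst hK0
      push_cast at hK
      refine ⟨1, taf_one B, Subgroup.one_mem G, ?_⟩
      show x = q
      linarith
    · have hk : 1 ≤ K ∨ K ≤ -1 := by omega
      have hfar : q + 1 ≤ x ∨ x ≤ q - 1 := by
        rcases hk with h | h
        · left
          have : (1:ℝ) ≤ (K:ℝ) := by exact_mod_cast h
          linarith
        · right
          have : (K:ℝ) ≤ -1 := by exact_mod_cast h
          linarith
      have hBe := far_empty hq Hx hfar
      subst hBe
      have hPG1 : TimedAutFixing {p} ⊆ ↑G := by rwa [Set.empty_union] at hPG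
      have hQG1 : TimedAutFixing {q} ⊆ ↑G := by rwa [Set.empty_union] at hQG
      have hxp : ∀ j : ℤ, p + (j:ℝ) ≠ x := by
        intro j hj
        exact hpq (j - K) (by push_cast; linarith)
      have hct := ceil_translate hxp
      set pm1 := p + (⌈x - p⌉:ℝ) with hpm1
      -- x < pm1 < x + 1
      rcases hk with hk1 | hk1
      · -- K ≥ 1 : first move x down into (x-1, x)
        set x' := (max (pm1 - 1) (x - 1) + x)/2 with hx'def
        have hxmax : max (pm1 - 1) (x - 1) < x := max_lt (by linarith [hct.1]) (by linarith)
        have h1 : max (pm1 - 1) (x - 1) < x' := by simp only [hx'def]; linarith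
        have h2 : x' < x := by simp only [hx'def]; linarith
        have h3 : pm1 - 1 < x' := lt_of_le_of_lt (le_max_left _ _) h1
        have h4 : x - 1 < x' := lt_of_le_of_lt (le_max_right _ _) h1
        obtain ⟨πP, hπP, hπPx⟩ := singleton_move p x x' pm1 ⌈x - p⌉ rfl
          (by linarith) (by linarith [hct.1]) (by linarith) (by linarith [hct.1])
        have hx'q : ∀ j : ℤ, q + (j:ℝ) ≠ x' := by
          intro j
          refine translate_ne_of_window (c := q) K ?_ ?_ j
          · push_cast; linarith
          · push_cast; linarith
        obtain ⟨g, hgfix, hgG, hgx'⟩ := orbit_aux hB hq hpq hPG hQG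
          ((2 * ⌊x' - q⌋ + 1).natAbs) x'
          (fun c hc => absurd hc (Set.notMem_empty c))
          (fun c hc => absurd hc (Set.notMem_empty c)) hx'q le_rfl
        refine ⟨g * πP, taf_mul hgfix (taf_mono (Set.empty_subset _) hπP),
          Subgroup.mul_mem G hgG (hPG1 hπP), ?_⟩
        show g (πP x) = q
        rw [hπPx, hgx']
      · -- K ≤ -1 : move x up into (x, x+1)
        set x' := (x + pm1)/2 with hx'def
        have h1 : x < x' := by simp only [hx'def]; linarith [hct.1]
        have h2 : x' < pm1 := by simp only [hx'def]; linarith [hct.1]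
        have h3 : x' < x + 1 := by linarith [hct.2]
        obtain ⟨πP, hπP, hπPx⟩ := singleton_move p x x' pm1 ⌈x - p⌉ rfl
          (by linarith [hct.1]) (by linarith [hct.1]) (by linarith) (by linarith)
        have hx'q : ∀ j : ℤ, q + (j:ℝ) ≠ x' := by
          intro j
          refine translate_ne_of_window (c := q) (K + 1) ?_ ?_ j
          · push_cast; linarith
          · push_cast; linarith
        obtain ⟨g, hgfix, hgG, hgx'⟩ := orbit_aux hB hq hpq hPG hQG
          ((2 * ⌊x' - q⌋ + 1).natAbs) x'
          (fun c hc => absurd hc (Set.notMem_empty c))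
          (fun c hc => absurd hc (Set.notMem_empty c)) hx'q le_rfl
        refine ⟨g * πP, taf_mul hgfix (taf_mono (Set.empty_subset _) hπP),
          Subgroup.mul_mem G hgG (hPG1 hπP), ?_⟩
        show g (πP x) = q
        rw [hπPx, hgx']

include hB hq hpq hPG hQG in
lemma key_lemma : TimedAutFixing B ⊆ ↑G := by
  intro π hπ
  set v := π.symm q with hv
  have hπv : π v = q := Equiv.apply_symm_apply π q
  have hvB : ∀ c ∈ B, ∀ k : ℤ, c + (k:ℝ) ≠ v := by
    intro c hc k he
    have h1 : π (c + (k:ℝ)) = c + (k:ℝ) := taf_fix_int hπ hc k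
    rw [he, hπv] at h1
    exact hq c hc k (he.trans h1.symm)
  have Hv : ∀ c ∈ B, ∀ k : ℤ, (c + (k:ℝ) < v ↔ c + (k:ℝ) < q) := by
    intro c hc k
    have h1 : π (c + (k:ℝ)) = c + (k:ℝ) := taf_fix_int hπ hc k
    constructor
    · intro h
      have := hπ.1.1 h
      rw [h1, hπv] at this
      exact this
    · intro h
      have h2 : π (c + (k:ℝ)) < π v := by rw [h1, hπv]; exact h
      exact lt_of_not_ge (fun hle => absurd h2 (not_lt_of_ge (by
        rcases lt_or_eq_of_le hle with h3 | h3
        · exact le_of_lt (hπ.1.1 h3)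
        · rw [h3])))
  obtain ⟨g, hgfix, hgG, hgv⟩ := orbit_all hB hq hpq hPG hQG v hvB Hv
  have hginv : (g⁻¹ : Equiv.Perm ℝ) q = v := by
    have : (g⁻¹ : Equiv.Perm ℝ) (g v) = v := by simp
    rw [hgv] at this
    exact this
  have hσ : π * g⁻¹ ∈ TimedAutFixing (B ∪ {q}) := by
    have hginvfix := taf_inv hgfix
    refine ⟨ita_mul hπ.1 hginvfix.1, ?_⟩
    rintro t (ht | ht)
    · show π ((g⁻¹ : Equiv.Perm ℝ) t) = t
      rw [hginvfix.2 t ht, hπ.2 t ht]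
    · simp only [Set.mem_singleton_iff] at ht
      subst ht
      show π ((g⁻¹ : Equiv.Perm ℝ) t) = t
      rw [hginv, hπv]
  have : π = (π * g⁻¹) * g := by group
  rw [this]
  exact Subgroup.mul_mem G (hQG hσ) hgG

end orbit3

/-- let `F, F' ⊆ [0,1)` be finite and let `G` be a subgroup of
the group `Π` of timed automorphisms. If `Π_F ⊆ G` and `Π_{F'} ⊆ G` then
`Π_{F ∩ F'} ⊆ G`. -/
theorem timedAutFixing_inter_subset_subgroup
    (F F' : Set ℝ) (hF : F.Finite) (hF' : F'.Finite)
    (hFsub : F ⊆ Set.Ico (0 : ℝ) 1) (hF'sub : F' ⊆ Set.Ico (0 : ℝ) 1)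
    (G : Subgroup (Equiv.Perm ℝ)) (hGTA : ∀ π ∈ G, IsTimedAutPerm π)
    (hFG : TimedAutFixing F ⊆ ↑G) (hF'G : TimedAutFixing F' ⊆ ↑G) :
    TimedAutFixing (F ∩ F') ⊆ ↑G := by
  classical
  have hIco : ∀ c q : ℝ, c ∈ Set.Ico (0:ℝ) 1 → q ∈ Set.Ico (0:ℝ) 1 → c ≠ q →
      ∀ k : ℤ, c + (k:ℝ) ≠ q := by
    intro c q hc hq hne k he
    have hk0 : k = 0 := int_zero_of_abs_lt (x := (k:ℝ))
      (by rcases hc with ⟨h1, h2⟩; rcases hq with ⟨h3, h4⟩; linarith)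
      (by rcases hc with ⟨h1, h2⟩; rcases hq with ⟨h3, h4⟩; linarith) rfl
    subst hk0
    push_cast at he
    exact hne (by linarith)
  have haux : ∀ n : ℕ, ∀ B : Set ℝ, F ∩ F' ⊆ B → B ⊆ F ∪ F' →
      ((F ∪ F') \ B).ncard ≤ n → TimedAutFixing B ⊆ ↑G := by
    intro n
    induction n with
    | zero =>
      intro B hBl hBu hcard
      have hfin : ((F ∪ F') \ B).Finite := (hF.union hF').subset Set.diff_subset
      have hempty : (F ∪ F') \ B = ∅ := by
        exact (Set.ncard_eq_zero hfin).mp (le_antisymm hcard (Nat.zero_le _))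
      have hFB : F ⊆ B := by
        intro t ht
        by_contra htB
        exact absurd (show t ∈ (F ∪ F') \ B from ⟨Or.inl ht, htB⟩)
          (by rw [hempty]; exact Set.notMem_empty t)
      exact fun π hπ => hFG (taf_mono hFB hπ)
    | succ n ih =>
      intro B hBl hBu hcard
      by_cases hFB : F ⊆ B
      · exact fun π hπ => hFG (taf_mono hFB hπ)
      by_cases hF'B : F' ⊆ B
      · exact fun π hπ => hF'G (taf_mono hF'B hπ)
      obtain ⟨p, hpF, hpB⟩ := Set.not_subset.mp hFB
      obtain ⟨q, hqF', hqB⟩ := Set.not_subset.mp hF'B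
      have hBfin : B.Finite := (hF.union hF').subset hBu
      have hpq0 : p ≠ q := by
        intro he
        subst he
        exact hpB (hBl ⟨hpF, hqF'⟩)
      have hq' : ∀ c ∈ B, ∀ k : ℤ, c + (k:ℝ) ≠ q := by
        intro c hc k
        have hcq : c ≠ q := by intro he; subst he; exact hqB hc
        exact hIco c q ((Set.union_subset hFsub hF'sub) (hBu hc)) (hF'sub hqF') hcq k
      have hpq' : ∀ k : ℤ, p + (k:ℝ) ≠ q :=
        hIco p q (hFsub hpF) (hF'sub hqF') hpq0
      have hfin : ((F ∪ F') \ B).Finite := (hF.union hF').subset Set.diff_subset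
      have hPsub : TimedAutFixing (B ∪ {p}) ⊆ ↑G := by
        apply ih (B ∪ {p})
        · exact le_trans hBl Set.subset_union_left
        · exact Set.union_subset hBu (by simp [Set.singleton_subset_iff]; exact Or.inl hpF)
        · have h1 : (F ∪ F') \ (B ∪ {p}) = ((F ∪ F') \ B) \ {p} := by
            rw [Set.diff_diff]
          rw [h1]
          have hpmem : p ∈ (F ∪ F') \ B := ⟨Or.inl hpF, hpB⟩
          have := Set.ncard_diff_singleton_lt_of_mem hpmem hfin
          have h2 := Set.ncard_diff_singleton_le ((F ∪ F') \ B) p  -- maybe unused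
          omega
      have hQsub : TimedAutFixing (B ∪ {q}) ⊆ ↑G := by
        apply ih (B ∪ {q})
        · exact le_trans hBl Set.subset_union_left
        · exact Set.union_subset hBu (by simp [Set.singleton_subset_iff]; exact Or.inr hqF')
        · have h1 : (F ∪ F') \ (B ∪ {q}) = ((F ∪ F') \ B) \ {q} := by
            rw [Set.diff_diff]
          rw [h1]
          have hqmem : q ∈ (F ∪ F') \ B := ⟨Or.inr hqF', hqB⟩
          have := Set.ncard_diff_singleton_lt_of_mem hqmem hfin
          omega
      exact key_lemma hBfin hq' hpq' hPsub hQsub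
  exact haux ((F ∪ F') \ (F ∩ F')).ncard (F ∩ F') le_rfl
    (le_trans Set.inter_subset_left Set.subset_union_left) le_rfl
end

section
/- Let S ⊆ ℝ be a finite nonempty set and u ∈ ℝ. Consider the S-orbit of u, i.e., the set {π(u) : π an S-timed automorphism}. If u ∈ S + ℤ (that is, u = s + z for some s ∈ S and z ∈ ℤ), then this orbit equals the singleton {u}. Otherwise, the orbit equals the open interval (l, h), where l is the greatest element of S + ℤ strictly below u and h is the smallest element of S + ℤ strictly above u (both of which exist, and have the form s + z with s ∈ S and z ∈ ℤ). -/
/-- A timed automorphism: a strictly monotone bijection `ℝ → ℝ`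
preserving integer differences, i.e. `f (t + 1) = f t + 1`. -/
def IsTimedAut (f : ℝ → ℝ) : Prop :=
  Function.Bijective f ∧ StrictMono f ∧ ∀ t : ℝ, f (t + 1) = f t + 1

/-- The `S`-orbit of `u`: the set of images of `u` under `S`-timed
automorphisms. -/
def timedOrbit (S : Set ℝ) (u : ℝ) : Set ℝ :=
  {y | ∃ f : ℝ → ℝ, IsTimedAut f ∧ (∀ t ∈ S, f t = t) ∧ y = f u}

/-- `S + ℤ`: the set of reals of the form `s + z` with `s ∈ S`, `z ∈ ℤ`. -/
def intShifts (S : Set ℝ) : Set ℝ :=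
  {x | ∃ s ∈ S, ∃ z : ℤ, x = s + z}

lemma aut_shift {f : ℝ → ℝ} (hf : ∀ t, f (t+1) = f t + 1) :
    ∀ (t : ℝ) (z : ℤ), f (t + z) = f t + z := by
  have hsub : ∀ t : ℝ, f (t - 1) = f t - 1 := by
    intro t; have := hf (t - 1); simp at this; linarith
  intro t z
  induction z using Int.induction_on with
  | zero => simp
  | succ n ih =>
      have : t + ((n : ℤ) + 1 : ℤ) = (t + (n : ℤ)) + 1 := by push_cast; ring
      rw [this, hf, ih]; push_cast; ring
  | pred n ih =>
      have : t + (-(n : ℤ) - 1 : ℤ) = (t + (-(n : ℤ) : ℤ)) - 1 := by push_cast; ring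
      rw [this, hsub, ih]; push_cast; ring

noncomputable def pw (l u h v : ℝ) (r : ℝ) : ℝ :=
  if r ≤ u then l + (r - l) * ((v - l) / (u - l))
  else if r < h then v + (r - u) * ((h - v) / (h - u))
  else r

section PW
variable {l u h v : ℝ}

lemma pw_mem (hlu : l < u) (huh : u < h) (hlv : l < v) (hvh : v < h) (hh : h ≤ l + 1)
    (r : ℝ) (h1 : l ≤ r) (h2 : r < l + 1) :
    l ≤ pw l u h v r ∧ pw l u h v r < l + 1 := by
  unfold pw
  have hul : (0:ℝ) < u - l := by linarith
  have hhu : (0:ℝ) < h - u := by linarith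
  have hq : 0 < (v - l) / (u - l) := div_pos (by linarith) hul
  have hq2 : 0 < (h - v) / (h - u) := div_pos (by linarith) hhu
  split_ifs with h3 h4
  · constructor
    · nlinarith [mul_nonneg (by linarith : (0:ℝ) ≤ r - l) hq.le]
    · have : (r - l) * ((v - l) / (u - l)) ≤ (u - l) * ((v - l) / (u - l)) := by
        nlinarith
      have he : (u - l) * ((v - l) / (u - l)) = v - l := by field_simp
      nlinarith
  · constructor
    · nlinarith [mul_nonneg (by linarith : (0:ℝ) ≤ r - u) hq2.le]
    · have : (r - u) * ((h - v) / (h - u)) < (h - u) * ((h - v) / (h - u)) := by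
        nlinarith
      have he : (h - u) * ((h - v) / (h - u)) = h - v := by field_simp
      nlinarith
  · exact ⟨h1, h2⟩

lemma pw_le_v (hlu : l < u) (hlv : l < v) (r : ℝ) (h3 : r ≤ u) : pw l u h v r ≤ v := by
  unfold pw
  have hul : (0:ℝ) < u - l := by linarith
  have hq : 0 < (v - l) / (u - l) := div_pos (by linarith) hul
  rw [if_pos h3]
  have : (r - l) * ((v - l) / (u - l)) ≤ (u - l) * ((v - l) / (u - l)) := by nlinarith
  have he : (u - l) * ((v - l) / (u - l)) = v - l := by field_simp
  nlinarith

lemma pw_mono (hlu : l < u) (huh : u < h) (hlv : l < v) (hvh : v < h)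
    (r₁ r₂ : ℝ) (h1 : l ≤ r₁) (h12 : r₁ < r₂) :
    pw l u h v r₁ < pw l u h v r₂ := by
  have hul : (0:ℝ) < u - l := by linarith
  have hhu : (0:ℝ) < h - u := by linarith
  have hq : 0 < (v - l) / (u - l) := div_pos (by linarith) hul
  have hq2 : 0 < (h - v) / (h - u) := div_pos (by linarith) hhu
  have hle := fun r hr => pw_le_v (l := l) (u := u) (h := h) (v := v) hlu hlv r hr
  have he : (h - u) * ((h - v) / (h - u)) = h - v := by field_simp
  by_cases a1 : r₁ ≤ u
  · have hb1 : pw l u h v r₁ ≤ v := hle r₁ a1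
    rw [show pw l u h v r₁ = l + (r₁ - l) * ((v - l) / (u - l)) from if_pos a1] at hb1 ⊢
    by_cases a2 : r₂ ≤ u
    · rw [show pw l u h v r₂ = l + (r₂ - l) * ((v - l) / (u - l)) from if_pos a2]
      nlinarith
    · by_cases a3 : r₂ < h
      · rw [show pw l u h v r₂ = v + (r₂ - u) * ((h - v) / (h - u)) from by
          unfold pw; rw [if_neg a2, if_pos a3]]
        push_neg at a2
        nlinarith [mul_pos (by linarith : (0:ℝ) < r₂ - u) hq2]
      · rw [show pw l u h v r₂ = r₂ from by unfold pw; rw [if_neg a2, if_neg a3]]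
        push_neg at a3
        linarith
  · push_neg at a1
    by_cases a4 : r₁ < h
    · rw [show pw l u h v r₁ = v + (r₁ - u) * ((h - v) / (h - u)) from by
        unfold pw; rw [if_neg (not_le.mpr a1), if_pos a4]]
      have a2 : ¬ r₂ ≤ u := by push_neg; linarith
      by_cases a3 : r₂ < h
      · rw [show pw l u h v r₂ = v + (r₂ - u) * ((h - v) / (h - u)) from by
          unfold pw; rw [if_neg a2, if_pos a3]]
        nlinarith
      · rw [show pw l u h v r₂ = r₂ from by unfold pw; rw [if_neg a2, if_neg a3]]
        push_neg at a3
        nlinarith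
    · push_neg at a4
      rw [show pw l u h v r₁ = r₁ from by unfold pw; rw [if_neg (not_le.mpr a1), if_neg (not_lt.mpr a4)]]
      have a2 : ¬ r₂ ≤ u := by push_neg; linarith
      have a3 : ¬ r₂ < h := by push_neg; linarith
      rw [show pw l u h v r₂ = r₂ from by unfold pw; rw [if_neg a2, if_neg a3]]
      exact h12

lemma pw_inv (hlu : l < u) (huh : u < h) (hlv : l < v) (hvh : v < h)
    (r : ℝ) (h1 : l ≤ r) :
    pw l v h u (pw l u h v r) = r := by
  have hul : (0:ℝ) < u - l := by linarith
  have hhu : (0:ℝ) < h - u := by linarith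
  have hvl : (0:ℝ) < v - l := by linarith
  have hhv : (0:ℝ) < h - v := by linarith
  by_cases a1 : r ≤ u
  · rw [show pw l u h v r = l + (r - l) * ((v - l) / (u - l)) from if_pos a1]
    set s := l + (r - l) * ((v - l) / (u - l)) with hsdef
    have hs : s ≤ v := by
      rw [hsdef]
      have : (r - l) * ((v - l) / (u - l)) ≤ (u - l) * ((v - l) / (u - l)) := by
        nlinarith [div_pos hvl hul]
      have he : (u - l) * ((v - l) / (u - l)) = v - l := by field_simp
      nlinarith
    rw [show pw l v h u s = l + (s - l) * ((u - l) / (v - l)) from if_pos hs, hsdef]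
    field_simp
    ring
  · push_neg at a1
    by_cases a2 : r < h
    · rw [show pw l u h v r = v + (r - u) * ((h - v) / (h - u)) from by
        unfold pw; rw [if_neg (not_le.mpr a1), if_pos a2]]
      set s := v + (r - u) * ((h - v) / (h - u)) with hsdef
      have hgt : v < s := by
        rw [hsdef]
        nlinarith [mul_pos (by linarith : (0:ℝ) < r - u) (div_pos hhv hhu)]
      have hlt : s < h := by
        rw [hsdef]
        have : (r - u) * ((h - v) / (h - u)) < (h - u) * ((h - v) / (h - u)) := by
          nlinarith [div_pos hhv hhu]
        have he : (h - u) * ((h - v) / (h - u)) = h - v := by field_simp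
        nlinarith
      rw [show pw l v h u s = u + (s - v) * ((h - u) / (h - v)) from by
        unfold pw; rw [if_neg (not_le.mpr hgt), if_pos hlt], hsdef]
      field_simp
      ring
    · push_neg at a2
      rw [show pw l u h v r = r from by unfold pw; rw [if_neg (not_le.mpr a1), if_neg (not_lt.mpr a2)]]
      rw [show pw l v h u r = r from by
        unfold pw; rw [if_neg (not_le.mpr (by linarith : v < r)), if_neg (not_lt.mpr a2)]]

lemma pw_at_u (hlu : l < u) : pw l u h v u = v := by
  unfold pw
  rw [if_pos le_rfl]
  have hul : u - l ≠ 0 := by linarith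
  field_simp
  ring

lemma pw_at_l (hlu : l < u) : pw l u h v l = l := by
  unfold pw
  rw [if_pos hlu.le]
  ring

lemma pw_ge_h (huh : u < h) (r : ℝ) (hr : h ≤ r) : pw l u h v r = r := by
  unfold pw
  rw [if_neg (by push_neg; linarith), if_neg (by push_neg; linarith)]

end PW

noncomputable def FF (l u h v : ℝ) (t : ℝ) : ℝ :=
  pw l u h v (t - ⌊t - l⌋) + ⌊t - l⌋

section FF
variable {l u h v : ℝ} (hlu : l < u) (huh : u < h) (hlv : l < v) (hvh : v < h) (hh : h ≤ l + 1)

lemma frac_mem (l t : ℝ) : l ≤ t - ⌊t - l⌋ ∧ t - ⌊t - l⌋ < l + 1 := by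
  constructor
  · have := Int.floor_le (t - l); linarith
  · have := Int.lt_floor_add_one (t - l); linarith

include hlu huh hlv hvh hh

lemma FF_floor (t : ℝ) : ⌊FF l u h v t - l⌋ = ⌊t - l⌋ := by
  obtain ⟨m1, m2⟩ := frac_mem l t
  obtain ⟨p1, p2⟩ := pw_mem hlu huh hlv hvh hh _ m1 m2
  rw [Int.floor_eq_iff]
  unfold FF
  constructor
  · push_cast; linarith
  · push_cast; linarith

lemma FF_add_one (t : ℝ) : FF l u h v (t + 1) = FF l u h v t + 1 := by
  unfold FF
  have hfl : ⌊t + 1 - l⌋ = ⌊t - l⌋ + 1 := by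
    rw [show t + 1 - l = (t - l) + 1 by ring, Int.floor_add_one]
  rw [hfl]
  push_cast
  ring_nf

lemma FF_mono : StrictMono (FF l u h v) := by
  intro t₁ t₂ h12
  obtain ⟨m1, m2⟩ := frac_mem l t₁
  obtain ⟨n1, n2⟩ := frac_mem l t₂
  have hfl : ⌊t₁ - l⌋ ≤ ⌊t₂ - l⌋ := Int.floor_le_floor (by linarith)
  rcases lt_or_eq_of_le hfl with hlt | heq
  · obtain ⟨p1, p2⟩ := pw_mem hlu huh hlv hvh hh _ m1 m2
    obtain ⟨q1, q2⟩ := pw_mem hlu huh hlv hvh hh _ n1 n2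
    unfold FF
    have : (⌊t₁ - l⌋ : ℝ) + 1 ≤ (⌊t₂ - l⌋ : ℝ) := by exact_mod_cast Int.add_one_le_of_lt hlt
    linarith
  · unfold FF
    rw [← heq]
    have : t₁ - ⌊t₁ - l⌋ < t₂ - ⌊t₁ - l⌋ := by linarith
    have := pw_mono hlu huh hlv hvh _ _ m1 this
    linarith

lemma FF_inv (t : ℝ) : FF l v h u (FF l u h v t) = t := by
  have hfl := FF_floor hlu huh hlv hvh hh t
  conv_lhs => rw [FF, hfl]
  have : FF l u h v t - ⌊t - l⌋ = pw l u h v (t - ⌊t - l⌋) := by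
    unfold FF; ring
  rw [this, pw_inv hlu huh hlv hvh _ (frac_mem l t).1]
  ring

lemma FF_at_u : FF l u h v u = v := by
  unfold FF
  have : ⌊u - l⌋ = 0 := by
    rw [Int.floor_eq_zero_iff]
    constructor
    · linarith
    · linarith
  rw [this]
  push_cast
  rw [sub_zero, pw_at_u hlu, add_zero]

lemma FF_fix (t : ℝ) (hfix : t - ⌊t - l⌋ = l ∨ h ≤ t - ⌊t - l⌋) : FF l u h v t = t := by
  unfold FF
  rcases hfix with hl' | hr
  · rw [hl', pw_at_l hlu]; linarith [hl']
  · rw [pw_ge_h huh _ hr]; ring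

end FF

/-- for a finite nonempty `S ⊆ ℝ` and `u ∈ ℝ`, the `S`-orbit of
`u` is the singleton `{u}` if `u ∈ S + ℤ`; otherwise it is the open interval
`(l, h)` where `l` is the greatest element of `S + ℤ` strictly below `u` and
`h` the smallest element of `S + ℤ` strictly above `u` (both exist). -/
theorem timedOrbit_singleton_or_openInterval
    (S : Set ℝ) (hS : S.Finite) (hne : S.Nonempty) (u : ℝ) :
    (u ∈ intShifts S → timedOrbit S u = {u}) ∧
    (u ∉ intShifts S →
      ∃ l ∈ intShifts S, ∃ h ∈ intShifts S,
        l < u ∧ u < h ∧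
        (∀ x ∈ intShifts S, x < u → x ≤ l) ∧
        (∀ x ∈ intShifts S, u < x → h ≤ x) ∧
        timedOrbit S u = Set.Ioo l h) := by
  have hfixShifts : ∀ (f : ℝ → ℝ), IsTimedAut f → (∀ t ∈ S, f t = t) →
      ∀ x ∈ intShifts S, f x = x := by
    rintro f ⟨hbij, hmono, hshift⟩ hfix x ⟨s, hs, z, rfl⟩
    rw [aut_shift hshift s z, hfix s hs]
  constructor
  · intro hu
    ext y
    simp only [timedOrbit, Set.mem_setOf_eq, Set.mem_singleton_iff]
    constructor
    · rintro ⟨f, hf, hfix, rfl⟩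
      exact hfixShifts f hf hfix u hu
    · rintro rfl
      exact ⟨id, ⟨Function.bijective_id, strictMono_id, fun t => rfl⟩, fun t _ => rfl, rfl⟩
  · intro hu
    set Fs := hS.toFinset with hFs
    have hFne : Fs.Nonempty := hS.toFinset_nonempty.mpr hne
    set A := Fs.image (fun s => s + (⌊u - s⌋ : ℝ)) with hA
    set B := Fs.image (fun s => s + (⌈u - s⌉ : ℝ)) with hB
    set l := A.max' (hFne.image _) with hl
    set h := B.min' (hFne.image _) with hh'
    have hmemS : ∀ s, s ∈ Fs ↔ s ∈ S := fun s => hS.mem_toFinset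
    -- l properties
    obtain ⟨sl, hslF, hsll⟩ := Finset.mem_image.mp (A.max'_mem (hFne.image _))
    have hslS : sl ∈ S := (hmemS sl).mp hslF
    have hsll' : l = sl + (⌊u - sl⌋ : ℝ) := hsll.symm
    have hlmem : l ∈ intShifts S := ⟨sl, hslS, ⌊u - sl⌋, hsll'⟩
    have hlu : l < u := by
      rcases lt_or_eq_of_le (show l ≤ u by
        rw [hsll']; have := Int.floor_le (u - sl); linarith) with hlt | heq
      · exact hlt
      · exact absurd (heq ▸ hlmem) hu
    have hlmax : ∀ x ∈ intShifts S, x < u → x ≤ l := by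
      rintro x ⟨s, hs, z, rfl⟩ hxu
      have hz : z ≤ ⌊u - s⌋ := Int.le_floor.mpr (by push_cast; linarith)
      have : s + (⌊u - s⌋ : ℝ) ≤ l :=
        A.le_max' _ (Finset.mem_image.mpr ⟨s, (hmemS s).mpr hs, rfl⟩)
      have : (z : ℝ) ≤ (⌊u - s⌋ : ℝ) := by exact_mod_cast hz
      linarith [A.le_max' (s + (⌊u - s⌋ : ℝ)) (Finset.mem_image.mpr ⟨s, (hmemS s).mpr hs, rfl⟩)]
    -- h properties
    obtain ⟨sh, hshF, hshh⟩ := Finset.mem_image.mp (B.min'_mem (hFne.image _))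
    have hshS : sh ∈ S := (hmemS sh).mp hshF
    have hshh' : h = sh + (⌈u - sh⌉ : ℝ) := hshh.symm
    have hhmem : h ∈ intShifts S := ⟨sh, hshS, ⌈u - sh⌉, hshh'⟩
    have huh : u < h := by
      rcases lt_or_eq_of_le (show u ≤ h by
        rw [hshh']; have := Int.le_ceil (u - sh); linarith) with hlt | heq
      · exact hlt
      · exact absurd (heq ▸ hhmem) hu
    have hhmin : ∀ x ∈ intShifts S, u < x → h ≤ x := by
      rintro x ⟨s, hs, z, rfl⟩ hxu
      have hz : ⌈u - s⌉ ≤ z := Int.ceil_le.mpr (by push_cast; linarith)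
      have h1 : h ≤ s + (⌈u - s⌉ : ℝ) :=
        B.min'_le _ (Finset.mem_image.mpr ⟨s, (hmemS s).mpr hs, rfl⟩)
      have : ((⌈u - s⌉ : ℤ) : ℝ) ≤ (z : ℝ) := by exact_mod_cast hz
      linarith
    have hh1 : h ≤ l + 1 := by
      have h1 : h ≤ sh + (⌈u - sh⌉ : ℝ) := le_of_eq hshh'
      have h2 : sh + (⌊u - sh⌋ : ℝ) ≤ l :=
        A.le_max' _ (Finset.mem_image.mpr ⟨sh, hshF, rfl⟩)
      have h3 : ⌈u - sh⌉ ≤ ⌊u - sh⌋ + 1 := Int.ceil_le_floor_add_one _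
      have : ((⌈u - sh⌉ : ℤ) : ℝ) ≤ ((⌊u - sh⌋ : ℤ) : ℝ) + 1 := by exact_mod_cast h3
      linarith
    refine ⟨l, hlmem, h, hhmem, hlu, huh, hlmax, hhmin, ?_⟩
    ext y
    simp only [timedOrbit, Set.mem_setOf_eq, Set.mem_Ioo]
    constructor
    · rintro ⟨f, hf, hfix, rfl⟩
      have hfl : f l = l := hfixShifts f hf hfix l hlmem
      have hfh : f h = h := hfixShifts f hf hfix h hhmem
      exact ⟨hfl ▸ hf.2.1 hlu, hfh ▸ hf.2.1 huh⟩
    · rintro ⟨hlv, hvh⟩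
      set v := y
      refine ⟨FF l u h v, ⟨?_, FF_mono hlu huh hlv hvh hh1, FF_add_one hlu huh hlv hvh hh1⟩, ?_, (FF_at_u hlu huh hlv hvh hh1).symm⟩
      · exact Function.bijective_iff_has_inverse.mpr
          ⟨FF l v h u, fun t => FF_inv hlu huh hlv hvh hh1 t,
            fun t => FF_inv hlv hvh hlu huh hh1 t⟩
      · intro s hs
        obtain ⟨m1, m2⟩ := frac_mem l s
        have hrmem : s - (⌊s - l⌋ : ℝ) ∈ intShifts S :=
          ⟨s, hs, -⌊s - l⌋, by push_cast; ring⟩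
        apply FF_fix hlu huh hlv hvh hh1
        rcases lt_or_eq_of_le m1 with hlr | heq
        · right
          have hru : u < s - (⌊s - l⌋ : ℝ) := by
            rcases lt_trichotomy (s - (⌊s - l⌋ : ℝ)) u with hlt | heq' | hgt
            · exact absurd (hlmax _ hrmem hlt) (by linarith)
            · exact absurd (heq' ▸ hrmem) hu
            · exact hgt
          exact hhmin _ hrmem hru
        · exact Or.inl heq.symm
end

section
/- Let A be a countably infinite set, ⊥ ∉ A, and k ∈ ℕ. A subset X ⊆ (A ∪ {⊥})^k is invariant under the componentwise action of Perm(A) (with π(⊥) = ⊥) if and only if X is a finite Boolean combination (built with union, intersection, and complement) of the basic sets {v : v_i = v_j} for 1 ≤ i, j ≤ k and {v : v_i = ⊥} for 1 ≤ i ≤ k. (This says that the subsets of (A ∪ {⊥})^k definable by equality constraints are exactly the invariant subsets.) -/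
attribute [local instance] Classical.propDecidable

/-- Equality constraints over variables `x₁, …, x_k`: quantifier-free
formulas built from `true`, `false`, `x_i = x_j`, `x_i = ⊥` using Boolean
connectives. -/
inductive EqConstraint (k : ℕ) : Type
  | tru : EqConstraint k
  | fls : EqConstraint k
  | eqVar : Fin k → Fin k → EqConstraint k
  | eqBot : Fin k → EqConstraint k
  | not : EqConstraint k → EqConstraint k
  | and : EqConstraint k → EqConstraint k → EqConstraint k
  | or : EqConstraint k → EqConstraint k → EqConstraint k

/-- The set of tuples in `(A ∪ {⊥})^k` defined by a constraint
(complement interprets negation, intersection conjunction, union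
disjunction). -/
def EqConstraint.sem {A : Type*} {k : ℕ} :
    EqConstraint k → Set (Fin k → Option A)
  | .tru => Set.univ
  | .fls => ∅
  | .eqVar i j => {v | v i = v j}
  | .eqBot i => {v | v i = none}
  | .not φ => φ.semᶜ
  | .and φ ψ => φ.sem ∩ ψ.sem
  | .or φ ψ => φ.sem ∪ ψ.sem

namespace EqHelp

variable {A : Type*} {k : ℕ}

def conjList : List (EqConstraint k) → EqConstraint k
  | [] => .tru
  | φ :: l => .and φ (conjList l)

lemma mem_conjList (L : List (EqConstraint k)) (v : Fin k → Option A) :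
    v ∈ (conjList L).sem ↔ ∀ φ ∈ L, v ∈ φ.sem := by
  induction L with
  | nil => simp [conjList, EqConstraint.sem]
  | cons φ l ih => simp [conjList, EqConstraint.sem, ih, Set.mem_inter_iff]

def disjList : List (EqConstraint k) → EqConstraint k
  | [] => .fls
  | φ :: l => .or φ (disjList l)

lemma mem_disjList (L : List (EqConstraint k)) (v : Fin k → Option A) :
    v ∈ (disjList L).sem ↔ ∃ φ ∈ L, v ∈ φ.sem := by
  induction L with
  | nil => simp [disjList, EqConstraint.sem]
  | cons φ l ih => simp [disjList, EqConstraint.sem, ih, Set.mem_union]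

noncomputable def typeOf (v : Fin k → Option A) :
    (Fin k → Bool) × (Fin k → Fin k → Bool) :=
  ⟨fun i => decide (v i = none), fun i j => decide (v i = v j)⟩

noncomputable def phiT (T : (Fin k → Bool) × (Fin k → Fin k → Bool)) :
    EqConstraint k :=
  conjList
    (((List.finRange k).map fun i =>
        if T.1 i then .eqBot i else .not (.eqBot i)) ++
      ((List.finRange k).flatMap fun i => (List.finRange k).map fun j =>
        if T.2 i j then .eqVar i j else .not (.eqVar i j)))

lemma mem_phiT (T : (Fin k → Bool) × (Fin k → Fin k → Bool))
    (v : Fin k → Option A) :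
    v ∈ (phiT T).sem ↔ typeOf v = T := by
  rw [phiT, mem_conjList]
  have step : (∀ φ ∈ (((List.finRange k).map fun i =>
        (if T.1 i then .eqBot i else .not (.eqBot i) : EqConstraint k)) ++
      ((List.finRange k).flatMap fun i => (List.finRange k).map fun j =>
        if T.2 i j then .eqVar i j else .not (.eqVar i j))), v ∈ φ.sem) ↔
      ((∀ i, v ∈ ((if T.1 i then .eqBot i else .not (.eqBot i) :
          EqConstraint k)).sem) ∧
        ∀ i j, v ∈ ((if T.2 i j then .eqVar i j else .not (.eqVar i j) :
          EqConstraint k)).sem) := by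
    constructor
    · intro h
      refine ⟨fun i => h _ (List.mem_append_left _
          (List.mem_map.2 ⟨i, List.mem_finRange i, rfl⟩)),
        fun i j => h _ (List.mem_append_right _
          (List.mem_flatMap.2 ⟨i, List.mem_finRange i,
            List.mem_map.2 ⟨j, List.mem_finRange j, rfl⟩⟩))⟩
    · rintro ⟨ha, hb⟩ φ hφ
      rcases List.mem_append.1 hφ with h | h
      · obtain ⟨i, _, rfl⟩ := List.mem_map.1 h; exact ha i
      · obtain ⟨i, _, h⟩ := List.mem_flatMap.1 h
        obtain ⟨j, _, rfl⟩ := List.mem_map.1 h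
        exact hb i j
  rw [step]
  have e1 : ∀ i : Fin k, (v ∈ ((if T.1 i then .eqBot i else .not (.eqBot i) :
      EqConstraint k)).sem) ↔ decide (v i = none) = T.1 i := by
    intro i
    cases hT : T.1 i <;> simp [hT, EqConstraint.sem]
  have e2 : ∀ i j : Fin k, (v ∈ ((if T.2 i j then .eqVar i j
      else .not (.eqVar i j) : EqConstraint k)).sem) ↔
      decide (v i = v j) = T.2 i j := by
    intro i j
    cases hT : T.2 i j <;> simp [hT, EqConstraint.sem]
  simp only [e1, e2]
  constructor
  · rintro ⟨h1, h2⟩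
    exact Prod.ext (funext fun i => h1 i) (funext fun i => funext fun j => h2 i j)
  · rintro rfl
    exact ⟨fun i => rfl, fun i j => rfl⟩

/-- Two tuples with the same equality type are related by a permutation. -/
lemma exists_perm [Countable A] [Infinite A] {v w : Fin k → Option A}
    (h1 : ∀ i, v i = none ↔ w i = none)
    (h2 : ∀ i j, v i = v j ↔ w i = w j) :
    ∃ π : Equiv.Perm A, ∀ i, Option.map π (v i) = w i := by
  classical
  set s : Set A := {a | ∃ i, v i = some a} with hs_def
  set t : Set A := {a | ∃ i, w i = some a} with ht_def
  have hs : s.Finite := by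
    have : s ⊆ some ⁻¹' Set.range v := by
      rintro a ⟨i, hi⟩; exact ⟨i, hi⟩
    exact Set.Finite.subset
      ((Set.finite_range v).preimage (Option.some_injective A).injOn) this
  have ht : t.Finite := by
    have : t ⊆ some ⁻¹' Set.range w := by
      rintro a ⟨i, hi⟩; exact ⟨i, hi⟩
    exact Set.Finite.subset
      ((Set.finite_range w).preimage (Option.some_injective A).injOn) this
  -- the partial map
  have h3 : ∀ a ∈ s, ∃ b, b ∈ t ∧ ∀ i, v i = some a → w i = some b := by
    rintro a ⟨i, hi⟩
    have hwi : w i ≠ none := by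
      intro h; rw [(h1 i).2 h] at hi; exact nomatch hi
    obtain ⟨b, hb⟩ := Option.ne_none_iff_exists'.1 hwi
    refine ⟨b, ⟨i, hb⟩, fun j hj => ?_⟩
    have : v j = v i := by rw [hi, hj]
    rw [(h2 j i).1 this, hb]
  choose f hf1 hf2 using h3
  have Finj : ∀ (a : A) (ha : a ∈ s) (a' : A) (ha' : a' ∈ s),
      f a ha = f a' ha' → a = a' := by
    intro a ha a' ha' hfe
    obtain ⟨i, hi⟩ := id ha
    obtain ⟨j, hj⟩ := id ha'
    have hwi := hf2 a ha i hi
    have hwj := hf2 a' ha' j hj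
    have : w i = w j := by rw [hwi, hwj, hfe]
    have : v i = v j := (h2 i j).2 this
    rw [hi, hj] at this
    exact Option.some.inj this
  have Fsurj : ∀ b ∈ t, ∃ a, ∃ ha : a ∈ s, f a ha = b := by
    rintro b ⟨j, hj⟩
    have hvj : v j ≠ none := by
      intro h
      rw [(h1 j).1 h] at hj; exact nomatch hj
    obtain ⟨a, hva⟩ := Option.ne_none_iff_exists'.1 hvj
    have ha : a ∈ s := ⟨j, hva⟩
    refine ⟨a, ha, ?_⟩
    have := hf2 a ha j hva
    rw [hj] at this
    exact (Option.some.inj this).symm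
  let F : s → t := fun a => ⟨f a.1 a.2, hf1 a.1 a.2⟩
  have hF : Function.Bijective F := by
    constructor
    · rintro ⟨a, ha⟩ ⟨a', ha'⟩ h
      have : f a ha = f a' ha' := congrArg Subtype.val h
      exact Subtype.ext (Finj a ha a' ha' this)
    · rintro ⟨b, hb⟩
      obtain ⟨a, ha, hab⟩ := Fsurj b hb
      exact ⟨⟨a, ha⟩, Subtype.ext hab⟩
  let e : s ≃ t := Equiv.ofBijective F hF
  -- complements
  have hsc : (sᶜ : Set A).Infinite := hs.infinite_compl
  have htc : (tᶜ : Set A).Infinite := ht.infinite_compl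
  obtain ⟨D1⟩ : Nonempty (Denumerable (sᶜ : Set A)) :=
    nonempty_denumerable_iff.mpr ⟨inferInstance, hsc.to_subtype⟩
  obtain ⟨D2⟩ : Nonempty (Denumerable (tᶜ : Set A)) :=
    nonempty_denumerable_iff.mpr ⟨inferInstance, htc.to_subtype⟩
  let e' : (sᶜ : Set A) ≃ (tᶜ : Set A) :=
    (@Denumerable.eqv _ D1).trans (@Denumerable.eqv _ D2).symm
  let π : Equiv.Perm A :=
    ((Equiv.Set.sumCompl s).symm.trans (Equiv.sumCongr e e')).trans
      (Equiv.Set.sumCompl t)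
  have hπ : ∀ a (ha : a ∈ s), π a = f a ha := by
    intro a ha
    show (Equiv.Set.sumCompl t) ((Equiv.sumCongr e e')
      ((Equiv.Set.sumCompl s).symm a)) = f a ha
    rw [Equiv.Set.sumCompl_symm_apply_of_mem ha]
    rfl
  refine ⟨π, fun i => ?_⟩
  cases hvi : v i with
  | none =>
    simp [(h1 i).1 hvi]
  | some a =>
    have ha : a ∈ s := ⟨i, hvi⟩
    have := hf2 a ha i hvi
    simp only [Option.map_some]
    rw [this, hπ a ha]

end EqHelp

open EqHelp in
/-- a subset `X ⊆ (A ∪ {⊥})^k` is invariant under the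
componentwise action of `Perm A` (with `π ⊥ = ⊥`) iff it is a finite Boolean
combination of the basic sets `{v : v_i = v_j}` and `{v : v_i = ⊥}`, i.e.
iff it is definable by an equality constraint. -/
theorem invariant_iff_definable
    {A : Type*} [Countable A] [Infinite A] (k : ℕ)
    (X : Set (Fin k → Option A)) :
    (∀ π : Equiv.Perm A, (fun v : Fin k → Option A =>
        fun i => Option.map π (v i)) '' X = X) ↔
      ∃ φ : EqConstraint k, X = EqConstraint.sem φ := by
  classical
  constructor
  · intro hInv
    set S : Finset ((Fin k → Bool) × (Fin k → Fin k → Bool)) :=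
      Finset.univ.filter (fun T => ∃ v ∈ X, typeOf v = T) with hS
    refine ⟨disjList (S.toList.map phiT), ?_⟩
    ext w
    rw [show ∀ (a : Fin k → Option A) (s : Set (Fin k → Option A)), (a ∈ s) = s a from fun _ _ => rfl]  -- no-op safety
    constructor
    · intro hw
      rw [show ∀ (a : Fin k → Option A) (s : Set (Fin k → Option A)), (a ∈ s) = s a from fun _ _ => rfl]
      show w ∈ (disjList (S.toList.map phiT)).sem
      rw [mem_disjList]
      refine ⟨phiT (typeOf w), ?_, ?_⟩
      · exact List.mem_map.2 ⟨typeOf w, Finset.mem_toList.2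
          (Finset.mem_filter.2 ⟨Finset.mem_univ _, ⟨w, hw, rfl⟩⟩), rfl⟩
      · exact (mem_phiT _ _).2 rfl
    · intro hw
      have hw' : w ∈ (disjList (S.toList.map phiT)).sem := hw
      rw [mem_disjList] at hw'
      obtain ⟨φ, hφ, hwφ⟩ := hw'
      obtain ⟨T, hT, rfl⟩ := List.mem_map.1 hφ
      have hTS := Finset.mem_filter.1 (Finset.mem_toList.1 hT)
      obtain ⟨v, hv, hvT⟩ := hTS.2
      have hwT : typeOf w = T := (mem_phiT _ _).1 hwφ
      have hvw : typeOf v = typeOf w := hvT.trans hwT.symm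
      have h1 : ∀ i, v i = none ↔ w i = none := by
        intro i
        have := congrFun (congrArg Prod.fst hvw) i
        simpa [typeOf, decide_eq_decide] using this
      have h2 : ∀ i j, v i = v j ↔ w i = w j := by
        intro i j
        have := congrFun (congrFun (congrArg Prod.snd hvw) i) j
        simpa [typeOf, decide_eq_decide] using this
      obtain ⟨π, hπ⟩ := exists_perm h1 h2
      rw [← hInv π]
      exact ⟨v, hv, funext hπ⟩
  · rintro ⟨φ, rfl⟩ π
    have key : ∀ (ψ : EqConstraint k) (σ : Equiv.Perm A)
        (v : Fin k → Option A),
        (fun i => Option.map σ (v i)) ∈ ψ.sem ↔ v ∈ ψ.sem := by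
      intro ψ
      induction ψ with
      | tru => intro σ v; simp [EqConstraint.sem]
      | fls => intro σ v; simp [EqConstraint.sem]
      | eqVar i j =>
        intro σ v
        simp only [EqConstraint.sem, Set.mem_setOf_eq]
        exact (Option.map_injective σ.injective).eq_iff
      | eqBot i =>
        intro σ v
        simp [EqConstraint.sem, Option.map_eq_none_iff]
      | not ψ ih =>
        intro σ v
        simp only [EqConstraint.sem, Set.mem_compl_iff]
        exact not_congr (ih σ v)
      | and ψ₁ ψ₂ ih₁ ih₂ =>
        intro σ v
        simp only [EqConstraint.sem, Set.mem_inter_iff, ih₁, ih₂]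
      | or ψ₁ ψ₂ ih₁ ih₂ =>
        intro σ v
        simp only [EqConstraint.sem, Set.mem_union, ih₁, ih₂]
    ext w
    constructor
    · rintro ⟨v, hv, rfl⟩
      exact (key φ π v).2 hv
    · intro hw
      refine ⟨fun i => Option.map π.symm (w i), (key φ π.symm w).2 hw, ?_⟩
      funext i
      simp [Option.map_map, Function.comp]
end

section
/- Let A be a countably infinite set, Σ a finite alphabet, and S, S' ⊆ A finite subsets. If a data language L ⊆ (Σ × A)* is both S-invariant and S'-invariant, then L is (S ∩ S')-invariant. (Finite supports of data languages over equality atoms are closed under intersection.) -/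
/-- Action of a bijection `π : A ≃ A` on a data word over `Γ × A`:
apply `π` to every data value. -/
def actDataWord {A Γ : Type*} (π : Equiv.Perm A) (w : List (Γ × A)) :
    List (Γ × A) :=
  w.map (fun p => (p.1, π p.2))

/-- A data language `L` is `S`-invariant if `π(L) = L` for every bijection
`π` of `A` fixing `S` pointwise. -/
def DataInvariant {A Γ : Type*} (S : Set A) (L : Set (List (Γ × A))) : Prop :=
  ∀ π : Equiv.Perm A, (∀ a ∈ S, π a = a) → actDataWord π '' L = L

section Aux

variable {A Γ : Type*}

lemma actDataWord_mul (π σ : Equiv.Perm A) (w : List (Γ × A)) :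
    actDataWord (π * σ) w = actDataWord π (actDataWord σ w) := by
  simp [actDataWord, List.map_map, Function.comp]

lemma actDataWord_one (w : List (Γ × A)) :
    actDataWord (1 : Equiv.Perm A) w = w := by
  simp [actDataWord]

lemma image_actDataWord_one (L : Set (List (Γ × A))) :
    actDataWord (1 : Equiv.Perm A) '' L = L := by
  rw [Set.image_congr' (fun w => actDataWord_one w)]
  exact Set.image_id L

lemma image_actDataWord_mul (π σ : Equiv.Perm A) (L : Set (List (Γ × A))) :
    actDataWord (π * σ) '' L = actDataWord π '' (actDataWord σ '' L) := by
  rw [Set.image_image]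
  exact Set.image_congr' (fun w => actDataWord_mul π σ w)

lemma fix_mul {π σ : Equiv.Perm A} {L : Set (List (Γ × A))}
    (hπ : actDataWord π '' L = L) (hσ : actDataWord σ '' L = L) :
    actDataWord (π * σ) '' L = L := by
  rw [image_actDataWord_mul, hσ, hπ]

/-- A swap of two atoms outside a set fixes that set pointwise. -/
lemma swap_fixes [DecidableEq A] {T : Set A} {x y : A} (hx : x ∉ T) (hy : y ∉ T) :
    ∀ s ∈ T, Equiv.swap x y s = s := fun s hs =>
  Equiv.swap_apply_of_ne_of_ne (by rintro rfl; exact hx hs) (by rintro rfl; exact hy hs)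

/-- A transposition of two atoms outside `S ∩ S'` preserves `L`. -/
lemma fix_swap [Infinite A] [DecidableEq A] {L : Set (List (Γ × A))} {S S' : Set A}
    (hS : S.Finite) (hS' : S'.Finite)
    (hSinv : DataInvariant S L) (hS'inv : DataInvariant S' L)
    {a b : A} (ha : a ∉ S ∩ S') (hb : b ∉ S ∩ S') :
    actDataWord (Equiv.swap a b) '' L = L := by
  by_cases hab : a = b
  · subst hab
    rw [Equiv.swap_self]
    exact image_actDataWord_one L
  -- mixed case as a general claim
  have claim : ∀ x y : A, x ∉ S' → y ∉ S → x ≠ y →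
      actDataWord (Equiv.swap x y) '' L = L := by
    intro x y hxS' hyS hxy
    obtain ⟨c, hc⟩ :=
      ((hS.union hS').union ((Set.finite_singleton y).insert x)).infinite_compl.nonempty
    simp only [Set.mem_compl_iff, Set.mem_union, Set.mem_insert_iff,
      Set.mem_singleton_iff, not_or] at hc
    obtain ⟨⟨hcS, hcS'⟩, hcx, hcy⟩ := hc
    have key : Equiv.swap c y * Equiv.swap x c * Equiv.swap c y = Equiv.swap y x :=
      Equiv.swap_mul_swap_mul_swap (fun h => hcx h.symm) hxy
    have hdecomp : Equiv.swap x y = Equiv.swap c y * Equiv.swap x c * Equiv.swap c y := by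
      rw [key, Equiv.swap_comm]
    rw [hdecomp]
    exact fix_mul (fix_mul (hSinv _ (swap_fixes hcS hyS))
      (hS'inv _ (swap_fixes hxS' hcS'))) (hSinv _ (swap_fixes hcS hyS))
  by_cases haS : a ∈ S
  · have haS' : a ∉ S' := fun h => ha ⟨haS, h⟩
    by_cases hbS' : b ∈ S'
    · have hbS : b ∉ S := fun h => hb ⟨h, hbS'⟩
      exact claim a b haS' hbS hab
    · -- a ∉ S', b ∉ S'
      exact hS'inv _ (swap_fixes haS' hbS')
  · by_cases hbS : b ∈ S
    · have hbS' : b ∉ S' := fun h => hb ⟨hbS, h⟩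
      by_cases haS' : a ∈ S'
      · rw [Equiv.swap_comm]
        exact claim b a hbS' haS (Ne.symm hab)
      · exact hS'inv _ (swap_fixes haS' hbS')
    · exact hSinv _ (swap_fixes haS hbS)

/-- Given `π` fixing `S ∩ S'` pointwise and a finite list of atoms, there is a
permutation `τ` preserving `L`, fixing `S ∩ S'` pointwise, and agreeing with
`π` on the list. -/
lemma exists_tau [Infinite A] {L : Set (List (Γ × A))} {S S' : Set A}
    (hS : S.Finite) (hS' : S'.Finite)
    (hSinv : DataInvariant S L) (hS'inv : DataInvariant S' L)
    (π : Equiv.Perm A) (hπ : ∀ a ∈ S ∩ S', π a = a) (l : List A) :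
    ∃ τ : Equiv.Perm A, (∀ a ∈ S ∩ S', τ a = a) ∧
      actDataWord τ '' L = L ∧ ∀ a ∈ l, τ a = π a := by
  induction l with
  | nil =>
      exact ⟨1, fun a _ => rfl, image_actDataWord_one L, fun a h => absurd h (by simp)⟩
  | cons a l ih =>
      classical
      obtain ⟨τ, hfix, hG, hl⟩ := ih
      by_cases h : τ a = π a
      · refine ⟨τ, hfix, hG, fun b hb => ?_⟩
        rcases List.mem_cons.mp hb with rfl | hb
        · exact h
        · exact hl b hb
      · -- a ∉ S ∩ S'
        have haSS' : a ∉ S ∩ S' := fun hmem => h ((hfix a hmem).trans (hπ a hmem).symm)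
        have hτa : τ a ∉ S ∩ S' := fun hmem => by
          have h1 : τ (τ a) = τ a := hfix _ hmem
          have h2 : τ a = a := τ.injective h1
          exact haSS' (h2 ▸ hmem)
        have hπa : π a ∉ S ∩ S' := fun hmem => by
          have h1 : π (π a) = π a := hπ _ hmem
          have h2 : π a = a := π.injective h1
          exact haSS' (h2 ▸ hmem)
        refine ⟨Equiv.swap (τ a) (π a) * τ, ?_, ?_, ?_⟩
        · intro s hs
          have h1 : τ s = s := hfix s hs
          have h2 : s ≠ τ a := fun he => hτa (he ▸ hs)
          have h3 : s ≠ π a := fun he => hπa (he ▸ hs)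
          simp only [Equiv.Perm.mul_apply, h1]
          exact Equiv.swap_apply_of_ne_of_ne h2 h3
        · exact fix_mul (fix_swap hS hS' hSinv hS'inv hτa hπa) hG
        · intro b hb
          rcases List.mem_cons.mp hb with rfl | hb
          · simp only [Equiv.Perm.mul_apply, Equiv.swap_apply_left]
          · have hba : b ≠ a := fun he => h (he ▸ hl b hb)
            have h1 : τ b = π b := hl b hb
            have h2 : π b ≠ τ a := fun he => hba (τ.injective (h1.trans he))
            have h3 : π b ≠ π a := fun he => hba (π.injective he)
            simp only [Equiv.Perm.mul_apply, h1]
            exact Equiv.swap_apply_of_ne_of_ne h2 h3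

end Aux

/-- over a countably infinite set `A` of equality atoms,
if a data language `L` is both `S`-invariant and `S'`-invariant for finite
`S, S' ⊆ A`, then `L` is `(S ∩ S')`-invariant. -/
theorem dataInvariant_inter
    {A Γ : Type*} [Countable A] [Infinite A] [Fintype Γ]
    (L : Set (List (Γ × A))) (S S' : Set A)
    (hS : S.Finite) (hS' : S'.Finite)
    (hSinv : DataInvariant S L) (hS'inv : DataInvariant S' L) :
    DataInvariant (S ∩ S') L := by
  classical
  have key : ∀ ρ : Equiv.Perm A, (∀ a ∈ S ∩ S', ρ a = a) →
      actDataWord ρ '' L ⊆ L := by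
    intro ρ hρ w hw
    obtain ⟨v, hv, rfl⟩ := hw
    obtain ⟨τ, _, hG, hl⟩ :=
      exists_tau hS hS' hSinv hS'inv ρ hρ (v.map Prod.snd)
    have heq : actDataWord ρ v = actDataWord τ v := by
      unfold actDataWord
      apply List.map_congr_left
      intro p hp
      have : ρ p.2 = τ p.2 := (hl p.2 (List.mem_map_of_mem (f := Prod.snd) hp)).symm
      rw [this]
    rw [heq, ← hG]
    exact Set.mem_image_of_mem _ hv
  intro π hπ
  apply le_antisymm (key π hπ)
  intro w hw
  have hπinv : ∀ a ∈ S ∩ S', π⁻¹ a = a := by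
    intro a ha
    have := hπ a ha
    nth_rewrite 1 [← this]
    exact π.symm_apply_apply a
  refine ⟨actDataWord π⁻¹ w, key π⁻¹ hπinv ⟨w, hw, rfl⟩, ?_⟩
  rw [← actDataWord_mul, mul_inv_cancel, actDataWord_one]
end
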